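/- arXiv:1906.00907 — 3 statements merged into one kernel-verified Lean document; each statement's English description precedes it below -/
import Mathlib

section
/- Let n be a positive even integer and let {𝔊^Sp_z}_{z ∈ I^FPF_n} be the symplectic Grothendieck polynomials. For every z ∈ I^FPF_n and every i ∈ [n−1]: if i+1 ≠ z(i) > z(i+1) ≠ i then ∂_i^{(β)} 𝔊^Sp_z = 𝔊^Sp_{s_i z s_i}, and otherwise ∂_i^{(β)} 𝔊^Sp_z = −β·𝔊^Sp_z. -/
open MvPolynomial

noncomputable section

/-- The coefficient ring `ℤ[β]`. -/
abbrev Rb : Type := Polynomial ℤ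

/-- The indeterminate `β`. -/
def bb : Rb := Polynomial.X

/-- The order-reversing permutation `n⋯321`, i.e. `i ↦ n+1-i` in 1-indexed notation. -/
def revPerm (n : ℕ) : Equiv.Perm (Fin n) :=
  ⟨Fin.rev, Fin.rev, fun i => Fin.rev_rev i, fun i => Fin.rev_rev i⟩

/-- `z` is a fixed-point-free involution. -/
def IsFPF {n : ℕ} (z : Equiv.Perm (Fin n)) : Prop :=
  z * z = 1 ∧ ∀ i, z i ≠ i

/-- `x_i + x_j + β x_i x_j`. -/
def oplus {n : ℕ} (i j : Fin n) : MvPolynomial (Fin n) Rb :=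
  X i + X j + C bb * (X i * X j)

/-- `IsDivDiffB i j f g` encodes `∂_i^{(β)} f = g` where `j = i+1`:
`∂_i^{(β)} f = ((1+βx_j) f - s_i((1+βx_j) f)) / (x_i - x_j)`, stated multiplicatively
(the quotient is exact, and `g` is uniquely determined since the ring is a domain). -/
def IsDivDiffB {n : ℕ} (i j : Fin n) (f g : MvPolynomial (Fin n) Rb) : Prop :=
  (X i - X j) * g =
    (1 + C bb * X j) * f - rename ⇑(Equiv.swap i j) ((1 + C bb * X j) * f)

/-- `∏_{1 ≤ i < j ≤ n-i} (x_i + x_j + β x_i x_j)` (variables 0-indexed). -/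
def spTop (n : ℕ) : MvPolynomial (Fin n) Rb :=
  ∏ p ∈ Finset.univ.filter
      (fun p : Fin n × Fin n => p.1 < p.2 ∧ (p.1 : ℕ) + (p.2 : ℕ) + 2 ≤ n),
    oplus p.1 p.2

/-- `x_1^{n-1} x_2^{n-2} ⋯ x_{n-1}^1` (variables 0-indexed). -/
def grTop (n : ℕ) : MvPolynomial (Fin n) Rb :=
  ∏ a : Fin n, X a ^ (n - 1 - (a : ℕ))

/-- The defining property of the family of symplectic Grothendieck polynomials. -/
def IsSpFam (n : ℕ) (G : Equiv.Perm (Fin n) → MvPolynomial (Fin n) Rb) : Prop :=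
  G (revPerm n) = spTop n ∧
    ∀ z : Equiv.Perm (Fin n), IsFPF z →
      ∀ i j : Fin n, (j : ℕ) = (i : ℕ) + 1 →
        z i ≠ j → z j ≠ i → z j < z i →
          IsDivDiffB i j (G z) (G (Equiv.swap i j * z * Equiv.swap i j))

/-- The defining property of the family of Grothendieck polynomials. -/
def IsGrothFam (n : ℕ) (G : Equiv.Perm (Fin n) → MvPolynomial (Fin n) Rb) : Prop :=
  G (revPerm n) = grTop n ∧
    ∀ (w : Equiv.Perm (Fin n)) (i j : Fin n), (j : ℕ) = (i : ℕ) + 1 →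
      w j < w i → IsDivDiffB i j (G w) (G (w * Equiv.swap i j))

/-- The length (number of inversions) of a permutation. -/
def invLen {n : ℕ} (w : Equiv.Perm (Fin n)) : ℕ :=
  (Finset.univ.filter (fun p : Fin n × Fin n => p.1 < p.2 ∧ w p.2 < w p.1)).card

/-- The fixed-point-free involution length `ℓ_fpf(z) = #{(i,j) : z(i) > z(j) < i < j}`. -/
def fpfLen {n : ℕ} (z : Equiv.Perm (Fin n)) : ℕ :=
  (Finset.univ.filter
      (fun p : Fin n × Fin n => z p.2 < z p.1 ∧ z p.2 < p.1 ∧ p.1 < p.2)).card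

/-- The underlying function of `Θ = (1,2)(3,4)⋯(n-1,n)`. -/
def thetaFun (n : ℕ) (hn : n % 2 = 0) (i : Fin n) : Fin n :=
  ⟨if (i : ℕ) % 2 = 0 then (i : ℕ) + 1 else (i : ℕ) - 1, by
    have hi := i.isLt
    split_ifs with h <;> omega⟩

/-- The fixed-point-free involution `Θ = (1,2)(3,4)⋯(n-1,n)`. -/
def theta (n : ℕ) (hn : n % 2 = 0) : Equiv.Perm (Fin n) :=
  Function.Involutive.toPerm (thetaFun n hn) (by
    intro i
    have hi := i.isLt
    apply Fin.ext
    simp only [thetaFun]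
    split_ifs <;> omega)

/-- One step of the partial Hecke action: `heckeStep a z = some (z · s_{a+1})` when defined,
with `a` a 0-indexed letter (so `a` corresponds to the simple transposition of `a+1, a+2`
in 1-indexed notation). -/
def heckeStep {n : ℕ} (a : ℕ) (z : Equiv.Perm (Fin n)) : Option (Equiv.Perm (Fin n)) :=
  if h : a + 1 < n then
    let i : Fin n := ⟨a, Nat.lt_of_succ_lt h⟩
    let j : Fin n := ⟨a + 1, h⟩
    if z i < z j then some (Equiv.swap i j * z * Equiv.swap i j)
    else if z i = j ∧ z j = i then none
    else if z i ≠ j ∧ z j ≠ i ∧ z j < z i then some z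
    else none
  else none

/-- Apply a word of (0-indexed) letters to `z` via the partial Hecke action. -/
def heckeApply {n : ℕ} (l : List ℕ) (z : Equiv.Perm (Fin n)) :
    Option (Equiv.Perm (Fin n)) :=
  l.foldl (fun o a => o.bind (heckeStep a)) (some z)

/-- The simple transposition corresponding to the 0-indexed letter `a`. -/
def swapAt (n : ℕ) (a : ℕ) : Equiv.Perm (Fin n) :=
  if h : a + 1 < n then Equiv.swap ⟨a, Nat.lt_of_succ_lt h⟩ ⟨a + 1, h⟩ else 1

/-- The permutation `s_{i_1} s_{i_2} ⋯ s_{i_l}` of a word. -/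
def wordToPerm (n : ℕ) (l : List ℕ) : Equiv.Perm (Fin n) := (l.map (swapAt n)).prod

/-- `l` is a reduced word for `w`. -/
def IsReducedWord (n : ℕ) (w : Equiv.Perm (Fin n)) (l : List ℕ) : Prop :=
  (∀ a ∈ l, a + 1 < n) ∧ wordToPerm n l = w ∧ l.length = invLen w

/-- The set of Hecke atoms `B_fpf(z)`. -/
def Bfpf (n : ℕ) (hn : n % 2 = 0) (z : Equiv.Perm (Fin n)) :
    Finset (Equiv.Perm (Fin n)) :=
  @Finset.filter _
    (fun w => ∃ l : List ℕ, IsReducedWord n w l ∧ heckeApply l (theta n hn) = some z)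
    (Classical.decPred _) Finset.univ

/-- `extPerm z w` is the permutation `z × w` acting on the first `m` letters by `z`
and the last `n` letters by `w`. -/
def extPerm {m n : ℕ} (z : Equiv.Perm (Fin m)) (w : Equiv.Perm (Fin n)) :
    Equiv.Perm (Fin (m + n)) :=
  finSumFinEquiv.symm.trans ((Equiv.sumCongr z w).trans finSumFinEquiv)

/-- `rank(z_{[i][j]}) = #{k ∈ [j] : z(k) ≤ i}` (1-indexed sizes `i, j`). -/
def permRank {n : ℕ} (z : Equiv.Perm (Fin n)) (i j : ℕ) : ℕ :=
  (Finset.univ.filter (fun k : Fin n => (k : ℕ) < j ∧ ((z k : Fin n) : ℕ) < i)).card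

/-- The rank of the upper-left `i × j` corner of `A` (1-indexed sizes `i, j ≤ n`). -/
def cornerRank {n : ℕ} (A : Matrix (Fin n) (Fin n) ℂ) (i j : ℕ) : ℕ :=
  Matrix.rank (Matrix.of fun (a : Fin (min i n)) (b : Fin (min j n)) =>
    A ⟨(a : ℕ), lt_of_lt_of_le a.isLt (min_le_right i n)⟩
      ⟨(b : ℕ), lt_of_lt_of_le b.isLt (min_le_right j n)⟩)

/-- The orthogonal Rothe diagram `D^O(z) = {(i, z(j)) : z(i) > z(j) ≤ i < j}` (0-indexed). -/
def DO (n : ℕ) (z : Equiv.Perm (Fin n)) : Finset (Fin n × Fin n) :=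
  Finset.image (fun p : Fin n × Fin n => (p.1, z p.2))
    (Finset.univ.filter (fun p : Fin n × Fin n => z p.2 < z p.1 ∧ z p.2 ≤ p.1 ∧ p.1 < p.2))

/-- The symplectic Rothe diagram `D^Sp(z) = {(i, z(j)) : z(i) > z(j) < i < j}` (0-indexed). -/
def DSp (n : ℕ) (z : Equiv.Perm (Fin n)) : Finset (Fin n × Fin n) :=
  Finset.image (fun p : Fin n × Fin n => (p.1, z p.2))
    (Finset.univ.filter (fun p : Fin n × Fin n => z p.2 < z p.1 ∧ z p.2 < p.1 ∧ p.1 < p.2))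

/-- The essential set `Ess(D) = {(i,j) ∈ D : (i,j+1) ∉ D and (i+1,j) ∉ D}`. -/
def Ess {n : ℕ} (D : Finset (Fin n × Fin n)) : Finset (Fin n × Fin n) :=
  D.filter (fun p =>
    (∀ q ∈ D, ¬(q.1 = p.1 ∧ (q.2 : ℕ) = (p.2 : ℕ) + 1)) ∧
    (∀ q ∈ D, ¬((q.1 : ℕ) = (p.1 : ℕ) + 1 ∧ q.2 = p.2)))

/-- A permutation is vexillary if it avoids the pattern 2143. -/
def Vexillary {n : ℕ} (z : Equiv.Perm (Fin n)) : Prop :=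
  ¬ ∃ i j k l : Fin n, i < j ∧ j < k ∧ k < l ∧ z j < z i ∧ z i < z l ∧ z l < z k

/-- The ideal of `ℤ[x_1,…,x_N]` generated by symmetric polynomials with zero constant term. -/
def ILambda (N : ℕ) : Ideal (MvPolynomial (Fin N) ℤ) :=
  Ideal.span {f : MvPolynomial (Fin N) ℤ |
    (∀ σ : Equiv.Perm (Fin N), rename (⇑σ) f = f) ∧ coeff 0 f = 0}

/-- Substitute `x_j = 0` for all `j > n`, producing a polynomial in `x_1,…,x_n`. -/
def truncVars (n N : ℕ) (f : MvPolynomial (Fin N) Rb) : MvPolynomial (Fin n) Rb :=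
  aeval (fun i : Fin N => if h : (i : ℕ) < n then X ⟨(i : ℕ), h⟩ else 0) f

/-- The order used to list the elements of a pipe-dream subset `S`:
rows weakly increasing, columns strictly decreasing within a row. -/
def rowOrder {n : ℕ} (p q : Fin n × Fin n) : Prop :=
  p.1 < q.1 ∨ (p.1 = q.1 ∧ q.2 < p.2)

/-- `δ(S)` is a symplectic Hecke word for `z` (with Hecke words computed from `Θ`);
here `L` is the listing of `S` in the order `rowOrder`, and `(a,b) ∈ S` (0-indexed)
contributes the 0-indexed letter `a + b`, i.e. the 1-indexed letter `(b+1)+(a+1)-1`. -/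
def DeltaHeckeWord (n : ℕ) (hn : n % 2 = 0) (z : Equiv.Perm (Fin n))
    (S : Finset (Fin n × Fin n)) : Prop :=
  ∃ L : List (Fin n × Fin n), L.toFinset = S ∧ L.Chain' rowOrder ∧
    heckeApply (L.map (fun p => (p.1 : ℕ) + (p.2 : ℕ))) (theta n hn) = some z


-- ===================== auxiliary lemmas =====================

lemma ren_invol {n : ℕ} {a b : Fin n} (f : MvPolynomial (Fin n) Rb) :
    rename ⇑(Equiv.swap a b) (rename ⇑(Equiv.swap a b) f) = f := by
  rw [rename_rename]
  have : ⇑(Equiv.swap a b) ∘ ⇑(Equiv.swap a b) = id := by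
    funext x; simp [Equiv.swap_apply_self]
  rw [this, rename_id, AlgHom.id_apply]

lemma Xsub_ne {n : ℕ} {a c : Fin n} (hac : a ≠ c) :
    (X a - X c : MvPolynomial (Fin n) Rb) ≠ 0 := by
  intro hh
  exact hac (MvPolynomial.X_injective (sub_eq_zero.mp hh))

lemma cancelX {n : ℕ} {a c : Fin n} (hac : a ≠ c) {f g : MvPolynomial (Fin n) Rb}
    (h : (X a - X c) * f = (X a - X c) * g) : f = g :=
  mul_left_cancel₀ (Xsub_ne hac) h

lemma fpf_apply_apply {n : ℕ} {z : Equiv.Perm (Fin n)} (hz : IsFPF z) (x : Fin n) :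
    z (z x) = x := by
  have := DFunLike.congr_fun hz.1 x
  simpa [Equiv.Perm.mul_apply] using this

lemma conj_app {n : ℕ} (z : Equiv.Perm (Fin n)) (k l x : Fin n) :
    (Equiv.swap k l * z * Equiv.swap k l) x = Equiv.swap k l (z (Equiv.swap k l x)) := rfl

lemma fpf_conj {n : ℕ} {z : Equiv.Perm (Fin n)} (hz : IsFPF z) (a b : Fin n) :
    IsFPF (Equiv.swap a b * z * Equiv.swap a b) := by
  constructor
  · ext x
    simp [Equiv.Perm.mul_apply, Equiv.swap_apply_self, fpf_apply_apply hz]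
  · intro x hx
    rw [conj_app] at hx
    have := congrArg (Equiv.swap a b) hx
    rw [Equiv.swap_apply_self] at this
    exact hz.2 _ this

lemma conj_conj {n : ℕ} (z : Equiv.Perm (Fin n)) (a b : Fin n) :
    Equiv.swap a b * (Equiv.swap a b * z * Equiv.swap a b) * Equiv.swap a b = z := by
  ext x
  simp [Equiv.Perm.mul_apply, Equiv.swap_apply_self]

/-- The decreasing measure for the induction. -/
def Mz {n : ℕ} (z : Equiv.Perm (Fin n)) : ℕ := ∑ x : Fin n, (x : ℕ) * ((z x : Fin n) : ℕ)

lemma asc_facts {n : ℕ} {z : Equiv.Perm (Fin n)} (hz : IsFPF z) {k l : Fin n}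
    (hkl : (l : ℕ) = (k : ℕ) + 1) (hasc : z k < z l) :
    z k ≠ k ∧ z k ≠ l ∧ z l ≠ k ∧ z l ≠ l := by
  have hklv : (k : ℕ) < (l : ℕ) := by omega
  have hbk : z l ≠ k := by
    intro h
    have : z k = l := by rw [← fpf_apply_apply hz l, h]
    rw [this] at hasc
    have := Fin.lt_def.mp hasc
    rw [h] at this
    omega
  have hak : z k ≠ l := by
    intro h
    have : z l = k := by rw [← fpf_apply_apply hz k, h]
    exact hbk this
  exact ⟨hz.2 k, hak, hbk, hz.2 l⟩

lemma Mz_lt {n : ℕ} {z : Equiv.Perm (Fin n)} (hz : IsFPF z) {k l : Fin n}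
    (hkl : (l : ℕ) = (k : ℕ) + 1) (hasc : z k < z l) :
    Mz (Equiv.swap k l * z * Equiv.swap k l) < Mz z := by
  classical
  obtain ⟨hak, hal, hbk, hbl⟩ := asc_facts hz hkl hasc
  have hkl' : k ≠ l := fun h => by rw [h] at hkl; omega
  have hab : z k ≠ z l := Fin.ne_of_lt hasc
  have hka : k ≠ z k := (hak).symm
  have hza : z (z k) = k := fpf_apply_apply hz k
  have hzb : z (z l) = l := fpf_apply_apply hz l
  set z' := Equiv.swap k l * z * Equiv.swap k l with hz'
  have v1 : z' k = z l := by
    rw [conj_app, Equiv.swap_apply_left, Equiv.swap_apply_of_ne_of_ne hbk hbl]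
  have v2 : z' l = z k := by
    rw [conj_app, Equiv.swap_apply_right, Equiv.swap_apply_of_ne_of_ne hak hal]
  have v3 : z' (z k) = l := by
    rw [conj_app, Equiv.swap_apply_of_ne_of_ne hak hal, hza, Equiv.swap_apply_left]
  have v4 : z' (z l) = k := by
    rw [conj_app, Equiv.swap_apply_of_ne_of_ne hbk hbl, hzb, Equiv.swap_apply_right]
  have voff : ∀ x : Fin n, x ≠ k → x ≠ l → x ≠ z k → x ≠ z l → z' x = z x := by
    intro x h1 h2 h3 h4
    rw [conj_app, Equiv.swap_apply_of_ne_of_ne h1 h2,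
      Equiv.swap_apply_of_ne_of_ne
        (fun h => h3 (by rw [← fpf_apply_apply hz x, h]))
        (fun h => h4 (by rw [← fpf_apply_apply hz x, h]))]
  have key : ∀ w : Equiv.Perm (Fin n), Mz w =
      ((k:ℕ) * ((w k : Fin n):ℕ) + ((l:ℕ) * ((w l : Fin n):ℕ) +
        (((z k : Fin n):ℕ) * ((w (z k) : Fin n):ℕ) + ((z l : Fin n):ℕ) * ((w (z l) : Fin n):ℕ))))
      + ∑ x ∈ Finset.univ.filter
          (fun x : Fin n => ¬(x = k ∨ x = l ∨ x = z k ∨ x = z l)),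
          (x:ℕ) * ((w x : Fin n):ℕ) := by
    intro w
    rw [Mz, ← Finset.sum_filter_add_sum_filter_not Finset.univ
      (fun x : Fin n => x = k ∨ x = l ∨ x = z k ∨ x = z l)]
    congr 1
    have hset : Finset.univ.filter (fun x : Fin n => x = k ∨ x = l ∨ x = z k ∨ x = z l)
        = insert k (insert l (insert (z k) ({z l} : Finset (Fin n)))) := by
      ext x
      simp [Finset.mem_insert, Finset.mem_singleton]
    rw [hset, Finset.sum_insert, Finset.sum_insert, Finset.sum_insert, Finset.sum_singleton]
    · simp only [Finset.mem_singleton]; exact hab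
    · simp only [Finset.mem_insert, Finset.mem_singleton]
      push_neg
      exact ⟨hal.symm, hbl.symm⟩
    · simp only [Finset.mem_insert, Finset.mem_singleton]
      push_neg
      exact ⟨hkl', hka, hbk.symm⟩
  rw [key z', key z, v1, v2, v3, v4, hza, hzb]
  have hoff : ∑ x ∈ Finset.univ.filter
        (fun x : Fin n => ¬(x = k ∨ x = l ∨ x = z k ∨ x = z l)),
        (x:ℕ) * ((z' x : Fin n):ℕ)
      = ∑ x ∈ Finset.univ.filter
        (fun x : Fin n => ¬(x = k ∨ x = l ∨ x = z k ∨ x = z l)),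
        (x:ℕ) * ((z x : Fin n):ℕ) := by
    apply Finset.sum_congr rfl
    intro x hx
    simp only [Finset.mem_filter, Finset.mem_univ, true_and] at hx
    push_neg at hx
    rw [voff x hx.1 hx.2.1 hx.2.2.1 hx.2.2.2]
  rw [hoff]
  apply Nat.add_lt_add_right
  have habv : ((z k : Fin n):ℕ) < ((z l : Fin n):ℕ) := Fin.lt_def.mp hasc
  rw [hkl]
  nlinarith [habv]

lemma exists_asc {n : ℕ} {z : Equiv.Perm (Fin n)} (hne : z ≠ revPerm n) :
    ∃ k l : Fin n, (l : ℕ) = (k : ℕ) + 1 ∧ z k < z l := by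
  by_contra hcon
  push_neg at hcon
  apply hne
  cases n with
  | zero => ext x; exact x.elim0
  | succ m =>
    have hdesc : ∀ i : Fin m, z (i.succ) < z (i.castSucc) := by
      intro i
      have h := hcon i.castSucc i.succ (by simp)
      rcases lt_or_eq_of_le h with h' | h'
      · exact h'
      · exfalso
        have := z.injective h'
        have := congrArg Fin.val this
        simp at this
    have hsm : StrictMono (fun x : Fin (m+1) => Fin.rev (z x)) := by
      rw [Fin.strictMono_iff_lt_succ]
      intro i
      exact Fin.rev_lt_rev.mpr (hdesc i)
    have hsurj : Function.Surjective (fun x : Fin (m+1) => Fin.rev (z x)) :=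
      Fin.rev_surjective.comp z.surjective
    have hid : (fun x : Fin (m+1) => Fin.rev (z x)) = id := by
      apply (hsm.range_inj strictMono_id).mp
      rw [hsurj.range_eq, Set.range_id]
    ext x
    have := congrFun hid x
    simp only [id_eq] at this
    have h2 := congrArg Fin.rev this
    rw [Fin.rev_rev] at h2
    exact congrArg Fin.val h2


lemma lemA {n : ℕ} {p0 p1 p2 : Fin n} (h01 : p0 ≠ p1) (h12 : p1 ≠ p2) (h02 : p0 ≠ p2)
    {f g h : MvPolynomial (Fin n) Rb}
    (hf : rename ⇑(Equiv.swap p1 p2) f = f)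
    (e1 : IsDivDiffB p0 p1 f g) (e2 : IsDivDiffB p1 p2 g h) :
    rename ⇑(Equiv.swap p0 p1) h = h := by
  classical
  unfold IsDivDiffB at e1 e2
  have r1x : rename ⇑(Equiv.swap p0 p1) (X p0 : MvPolynomial (Fin n) Rb) = X p1 := by
    rw [rename_X]; simp
  have r1y : rename ⇑(Equiv.swap p0 p1) (X p1 : MvPolynomial (Fin n) Rb) = X p0 := by
    rw [rename_X]; simp
  have r1w : rename ⇑(Equiv.swap p0 p1) (X p2 : MvPolynomial (Fin n) Rb) = X p2 := by
    rw [rename_X, Equiv.swap_apply_of_ne_of_ne (Ne.symm h02) (Ne.symm h12)]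
  have r2x : rename ⇑(Equiv.swap p1 p2) (X p0 : MvPolynomial (Fin n) Rb) = X p0 := by
    rw [rename_X, Equiv.swap_apply_of_ne_of_ne h01 h02]
  have r2y : rename ⇑(Equiv.swap p1 p2) (X p1 : MvPolynomial (Fin n) Rb) = X p2 := by
    rw [rename_X]; simp
  have r2w : rename ⇑(Equiv.swap p1 p2) (X p2 : MvPolynomial (Fin n) Rb) = X p1 := by
    rw [rename_X]; simp
  set F1 := rename ⇑(Equiv.swap p0 p1) f with hF1
  set F2 := rename ⇑(Equiv.swap p1 p2) F1 with hF2
  set G2 := rename ⇑(Equiv.swap p1 p2) g with hG2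
  have E1 : (X p0 - X p1) * g = (1 + C bb * X p1) * f - (1 + C bb * X p0) * F1 := by
    rw [e1]; congr 1
    simp only [map_mul, map_add, map_one, rename_C, r1y]
    rfl
  have E2 : (X p1 - X p2) * h = (1 + C bb * X p2) * g - (1 + C bb * X p1) * G2 := by
    rw [e2]; congr 1
    simp only [map_mul, map_add, map_one, rename_C, r2w]
    rfl
  have E1' : (X p0 - X p2) * G2 = (1 + C bb * X p2) * f - (1 + C bb * X p0) * F2 := by
    have hh := congrArg (rename ⇑(Equiv.swap p1 p2)) E1
    simp only [map_mul, map_sub, map_add, map_one, rename_C, r2x, r2y, hf] at hh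
    exact hh
  have E3 : (X p0 - X p1) * rename ⇑(Equiv.swap p0 p1) g
      = (1 + C bb * X p1) * f - (1 + C bb * X p0) * F1 := by
    have hh := congrArg (rename ⇑(Equiv.swap p0 p1)) E1
    simp only [map_mul, map_sub, map_add, map_one, rename_C, r1x, r1y] at hh
    have hff : rename ⇑(Equiv.swap p0 p1) F1 = f := ren_invol f
    rw [hff] at hh
    linear_combination -hh
  have hperm : Equiv.swap p0 p1 * Equiv.swap p1 p2 * Equiv.swap p0 p1
      = Equiv.swap p1 p2 * Equiv.swap p0 p1 * Equiv.swap p1 p2 := by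
    have A := Equiv.swap_mul_swap_mul_swap (x := p2) (y := p1) (z := p0) h12.symm (Ne.symm h02)
    have B := Equiv.swap_mul_swap_mul_swap (x := p0) (y := p1) (z := p2) h01 h02
    rw [Equiv.swap_comm p1 p0, Equiv.swap_comm p2 p1] at A
    rw [Equiv.swap_comm p2 p0] at B
    exact A.trans B.symm
  have hfun : (⇑(Equiv.swap p0 p1) ∘ ⇑(Equiv.swap p1 p2)) ∘ ⇑(Equiv.swap p0 p1)
      = (⇑(Equiv.swap p1 p2) ∘ ⇑(Equiv.swap p0 p1)) ∘ ⇑(Equiv.swap p1 p2) := by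
    funext x
    have := DFunLike.congr_fun hperm x
    simpa [Equiv.Perm.mul_apply, Function.comp] using this
  have hbr : rename ⇑(Equiv.swap p0 p1) F2 = F2 := by
    calc rename ⇑(Equiv.swap p0 p1) F2
        = rename (⇑(Equiv.swap p0 p1) ∘ ⇑(Equiv.swap p1 p2)) F1 := rename_rename _ _ _
      _ = rename ((⇑(Equiv.swap p0 p1) ∘ ⇑(Equiv.swap p1 p2)) ∘ ⇑(Equiv.swap p0 p1)) f := rename_rename _ _ _
      _ = rename ((⇑(Equiv.swap p1 p2) ∘ ⇑(Equiv.swap p0 p1)) ∘ ⇑(Equiv.swap p1 p2)) f := by rw [hfun]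
      _ = rename (⇑(Equiv.swap p1 p2) ∘ ⇑(Equiv.swap p0 p1)) (rename ⇑(Equiv.swap p1 p2) f) := (rename_rename _ _ _).symm
      _ = rename (⇑(Equiv.swap p1 p2) ∘ ⇑(Equiv.swap p0 p1)) f := by rw [hf]
      _ = rename ⇑(Equiv.swap p1 p2) (rename ⇑(Equiv.swap p0 p1) f) := (rename_rename _ _ _).symm
      _ = F2 := rfl
  have E4 : (X p1 - X p2) * rename ⇑(Equiv.swap p0 p1) G2
      = (1 + C bb * X p2) * F1 - (1 + C bb * X p1) * F2 := by
    have hh := congrArg (rename ⇑(Equiv.swap p0 p1)) E1'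
    simp only [map_mul, map_sub, map_add, map_one, rename_C, r1x, r1w, hbr] at hh
    exact hh
  have E5 : (X p0 - X p2) * rename ⇑(Equiv.swap p0 p1) h =
      (1 + C bb * X p2) * rename ⇑(Equiv.swap p0 p1) g
        - (1 + C bb * X p0) * rename ⇑(Equiv.swap p0 p1) G2 := by
    have hh := congrArg (rename ⇑(Equiv.swap p0 p1)) E2
    simp only [map_mul, map_sub, map_add, map_one, rename_C, r1x, r1y, r1w] at hh
    exact hh
  have key : (X p0 - X p1) * ((X p1 - X p2) * ((X p0 - X p2)
      * (rename ⇑(Equiv.swap p0 p1) h - h))) = 0 := by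
    linear_combination (X p0 - X p1) * (X p1 - X p2) * E5
      + (1 + C bb * X p2) * (X p1 - X p2) * E3
      - (1 + C bb * X p0) * (X p0 - X p1) * E4
      - (X p0 - X p1) * (X p0 - X p2) * E2
      - (1 + C bb * X p2) * (X p0 - X p2) * E1
      + (1 + C bb * X p1) * (X p0 - X p1) * E1'
  have hne : ∀ (a c : Fin n), a ≠ c → (X a - X c : MvPolynomial (Fin n) Rb) ≠ 0 := by
    intro a c hac hh
    exact hac (MvPolynomial.X_injective (sub_eq_zero.mp hh))
  rcases mul_eq_zero.mp key with h' | h'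
  · exact absurd h' (hne _ _ h01)
  rcases mul_eq_zero.mp h' with h' | h'
  · exact absurd h' (hne _ _ h12)
  rcases mul_eq_zero.mp h' with h' | h'
  · exact absurd h' (hne _ _ h02)
  · exact sub_eq_zero.mp h'

lemma lemB {n : ℕ} {p0 p1 p2 : Fin n} (h01 : p0 ≠ p1) (h12 : p1 ≠ p2) (h02 : p0 ≠ p2)
    {f g h : MvPolynomial (Fin n) Rb}
    (hf : rename ⇑(Equiv.swap p0 p1) f = f)
    (e1 : IsDivDiffB p1 p2 f g) (e2 : IsDivDiffB p0 p1 g h) :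
    rename ⇑(Equiv.swap p1 p2) h = h := by
  classical
  unfold IsDivDiffB at e1 e2
  have r1x : rename ⇑(Equiv.swap p0 p1) (X p0 : MvPolynomial (Fin n) Rb) = X p1 := by
    rw [rename_X]; simp
  have r1y : rename ⇑(Equiv.swap p0 p1) (X p1 : MvPolynomial (Fin n) Rb) = X p0 := by
    rw [rename_X]; simp
  have r1w : rename ⇑(Equiv.swap p0 p1) (X p2 : MvPolynomial (Fin n) Rb) = X p2 := by
    rw [rename_X, Equiv.swap_apply_of_ne_of_ne (Ne.symm h02) (Ne.symm h12)]
  have r2x : rename ⇑(Equiv.swap p1 p2) (X p0 : MvPolynomial (Fin n) Rb) = X p0 := by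
    rw [rename_X, Equiv.swap_apply_of_ne_of_ne h01 h02]
  have r2y : rename ⇑(Equiv.swap p1 p2) (X p1 : MvPolynomial (Fin n) Rb) = X p2 := by
    rw [rename_X]; simp
  have r2w : rename ⇑(Equiv.swap p1 p2) (X p2 : MvPolynomial (Fin n) Rb) = X p1 := by
    rw [rename_X]; simp
  set G1 := rename ⇑(Equiv.swap p1 p2) f with hG1
  set G2 := rename ⇑(Equiv.swap p0 p1) G1 with hG2
  set S1g := rename ⇑(Equiv.swap p0 p1) g with hS1g
  have hperm : Equiv.swap p0 p1 * Equiv.swap p1 p2 * Equiv.swap p0 p1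
      = Equiv.swap p1 p2 * Equiv.swap p0 p1 * Equiv.swap p1 p2 := by
    have A := Equiv.swap_mul_swap_mul_swap (x := p2) (y := p1) (z := p0) h12.symm (Ne.symm h02)
    have B := Equiv.swap_mul_swap_mul_swap (x := p0) (y := p1) (z := p2) h01 h02
    rw [Equiv.swap_comm p1 p0, Equiv.swap_comm p2 p1] at A
    rw [Equiv.swap_comm p2 p0] at B
    exact A.trans B.symm
  have hfun : (⇑(Equiv.swap p1 p2) ∘ ⇑(Equiv.swap p0 p1)) ∘ ⇑(Equiv.swap p1 p2)
      = (⇑(Equiv.swap p0 p1) ∘ ⇑(Equiv.swap p1 p2)) ∘ ⇑(Equiv.swap p0 p1) := by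
    funext x
    have := DFunLike.congr_fun hperm x
    simpa [Equiv.Perm.mul_apply, Function.comp] using this.symm
  -- sigma2 G2 = G2
  have hbr : rename ⇑(Equiv.swap p1 p2) G2 = G2 := by
    calc rename ⇑(Equiv.swap p1 p2) G2
        = rename (⇑(Equiv.swap p1 p2) ∘ ⇑(Equiv.swap p0 p1)) G1 := rename_rename _ _ _
      _ = rename ((⇑(Equiv.swap p1 p2) ∘ ⇑(Equiv.swap p0 p1)) ∘ ⇑(Equiv.swap p1 p2)) f := rename_rename _ _ _
      _ = rename ((⇑(Equiv.swap p0 p1) ∘ ⇑(Equiv.swap p1 p2)) ∘ ⇑(Equiv.swap p0 p1)) f := by rw [hfun]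
      _ = rename (⇑(Equiv.swap p0 p1) ∘ ⇑(Equiv.swap p1 p2)) (rename ⇑(Equiv.swap p0 p1) f) := (rename_rename _ _ _).symm
      _ = rename (⇑(Equiv.swap p0 p1) ∘ ⇑(Equiv.swap p1 p2)) f := by rw [hf]
      _ = rename ⇑(Equiv.swap p0 p1) (rename ⇑(Equiv.swap p1 p2) f) := (rename_rename _ _ _).symm
      _ = G2 := rfl
  have E1 : (X p1 - X p2) * g = (1 + C bb * X p2) * f - (1 + C bb * X p1) * G1 := by
    rw [e1]; congr 1
    simp only [map_mul, map_add, map_one, rename_C, r2w]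
    rfl
  have E2 : (X p0 - X p1) * h = (1 + C bb * X p1) * g - (1 + C bb * X p0) * S1g := by
    rw [e2]; congr 1
    simp only [map_mul, map_add, map_one, rename_C, r1y]
    rfl
  have E3 : (X p0 - X p2) * S1g = (1 + C bb * X p2) * f - (1 + C bb * X p0) * G2 := by
    have hh := congrArg (rename ⇑(Equiv.swap p0 p1)) E1
    simp only [map_mul, map_sub, map_add, map_one, rename_C, r1x, r1y, r1w, hf] at hh
    exact hh
  have E4 : (X p2 - X p1) * rename ⇑(Equiv.swap p1 p2) g
      = (1 + C bb * X p1) * G1 - (1 + C bb * X p2) * f := by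
    have hh := congrArg (rename ⇑(Equiv.swap p1 p2)) E1
    have hinv : rename ⇑(Equiv.swap p1 p2) G1 = f := ren_invol f
    simp only [map_mul, map_sub, map_add, map_one, rename_C, r2y, r2w, hinv] at hh
    exact hh
  have E5 : (X p0 - X p1) * rename ⇑(Equiv.swap p1 p2) S1g
      = (1 + C bb * X p1) * G1 - (1 + C bb * X p0) * G2 := by
    have hh := congrArg (rename ⇑(Equiv.swap p1 p2)) E3
    simp only [map_mul, map_sub, map_add, map_one, rename_C, r2x, r2w, hbr, hG1] at hh
    exact hh
  have E6 : (X p0 - X p2) * rename ⇑(Equiv.swap p1 p2) h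
      = (1 + C bb * X p2) * rename ⇑(Equiv.swap p1 p2) g
        - (1 + C bb * X p0) * rename ⇑(Equiv.swap p1 p2) S1g := by
    have hh := congrArg (rename ⇑(Equiv.swap p1 p2)) E2
    simp only [map_mul, map_sub, map_add, map_one, rename_C, r2x, r2y, r2w] at hh
    exact hh
  have key : (X p0 - X p1) * ((X p1 - X p2) * ((X p0 - X p2)
      * (rename ⇑(Equiv.swap p1 p2) h - h))) = 0 := by
    linear_combination (X p0 - X p1) * (X p1 - X p2) * E6
      - (1 + C bb * X p2) * (X p0 - X p1) * E4
      - (1 + C bb * X p0) * (X p1 - X p2) * E5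
      - (X p1 - X p2) * (X p0 - X p2) * E2
      - (1 + C bb * X p1) * (X p0 - X p2) * E1
      + (1 + C bb * X p0) * (X p1 - X p2) * E3
  have hne : ∀ (a c : Fin n), a ≠ c → (X a - X c : MvPolynomial (Fin n) Rb) ≠ 0 := by
    intro a c hac hh
    exact hac (MvPolynomial.X_injective (sub_eq_zero.mp hh))
  rcases mul_eq_zero.mp key with h' | h'
  · exact absurd h' (hne _ _ h01)
  rcases mul_eq_zero.mp h' with h' | h'
  · exact absurd h' (hne _ _ h12)
  rcases mul_eq_zero.mp h' with h' | h'
  · exact absurd h' (hne _ _ h02)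
  · exact sub_eq_zero.mp h'


lemma rename_oplus {n : ℕ} (σ : Equiv.Perm (Fin n)) (a c : Fin n) :
    rename ⇑σ (oplus a c) = oplus (σ a) (σ c) := by
  simp [oplus, map_add, map_mul, rename_X, rename_C]

lemma spTop_symm {n : ℕ} {i j : Fin n} (hij : (j : ℕ) = (i : ℕ) + 1)
    (hn : n = 2 * (i : ℕ) + 2) :
    rename ⇑(Equiv.swap i j) (spTop n) = spTop n := by
  classical
  have hine : i ≠ j := fun h => by rw [h] at hij; omega
  have sv : ∀ x : Fin n, ((Equiv.swap i j x : Fin n) : ℕ)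
      = if (x:ℕ) = (i:ℕ) then (j:ℕ) else if (x:ℕ) = (j:ℕ) then (i:ℕ) else (x:ℕ) := by
    intro x
    rcases eq_or_ne x i with h | h
    · subst h
      rw [Equiv.swap_apply_left, if_pos rfl]
    · rcases eq_or_ne x j with h2 | h2
      · subst h2
        rw [Equiv.swap_apply_right, if_neg (by omega), if_pos rfl]
      · rw [Equiv.swap_apply_of_ne_of_ne h h2,
          if_neg (fun hh => h (Fin.val_injective hh)),
          if_neg (fun hh => h2 (Fin.val_injective hh))]
  rw [spTop, map_prod]
  rw [Finset.prod_congr rfl (fun p _ => rename_oplus (Equiv.swap i j) p.1 p.2)]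
  have hmem : ∀ p : Fin n × Fin n,
      p ∈ Finset.univ.filter
        (fun p : Fin n × Fin n => p.1 < p.2 ∧ (p.1 : ℕ) + (p.2 : ℕ) + 2 ≤ n) →
      (Equiv.swap i j p.1, Equiv.swap i j p.2) ∈ Finset.univ.filter
        (fun p : Fin n × Fin n => p.1 < p.2 ∧ (p.1 : ℕ) + (p.2 : ℕ) + 2 ≤ n) := by
    intro p hp
    simp only [Finset.mem_filter, Finset.mem_univ, true_and] at hp ⊢
    obtain ⟨h1, h2⟩ := hp
    rw [Fin.lt_def] at h1
    rw [Fin.lt_def]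
    have e1 := sv p.1
    have e2 := sv p.2
    rw [e1, e2]
    split_ifs at e1 e2 ⊢ <;> omega
  apply Finset.prod_nbij' (fun p : Fin n × Fin n => (Equiv.swap i j p.1, Equiv.swap i j p.2))
    (fun p : Fin n × Fin n => (Equiv.swap i j p.1, Equiv.swap i j p.2)) hmem hmem
  · intro p _
    simp [Equiv.swap_apply_self]
  · intro p _
    simp [Equiv.swap_apply_self]
  · intro p _
    rfl



lemma Gsymm {n : ℕ} {G : Equiv.Perm (Fin n) → MvPolynomial (Fin n) Rb} (hG : IsSpFam n G) :
    ∀ N : ℕ, ∀ z : Equiv.Perm (Fin n), Mz z ≤ N → IsFPF z →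
      ∀ i j : Fin n, (j : ℕ) = (i : ℕ) + 1 → z i = j →
        rename ⇑(Equiv.swap i j) (G z) = G z := by
  intro N
  induction N using Nat.strong_induction_on with
  | _ N IH =>
  intro z hM hz i j hij hzi
  have vne : ∀ {a b : Fin n}, (a:ℕ) ≠ (b:ℕ) → a ≠ b := fun h hab => h (congrArg Fin.val hab)
  have hiv : (i:ℕ) < n := i.isLt
  have hjv : (j:ℕ) < n := j.isLt
  have hijne : i ≠ j := vne (by omega)
  by_cases hrev : z = revPerm n
  · subst hrev
    have hveq := congrArg Fin.val hzi
    have hrv : ((revPerm n) i : ℕ) = n - ((i:ℕ) + 1) := rfl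
    rw [hrv] at hveq
    have hn : n = 2 * (i:ℕ) + 2 := by omega
    rw [hG.1]
    exact spTop_symm hij hn
  · obtain ⟨k, l, hkl, hasc⟩ := exists_asc hrev
    have hlv : (l:ℕ) < n := l.isLt
    obtain ⟨hak, hal, hbk, hbl⟩ := asc_facts hz hkl hasc
    have hkl' : k ≠ l := vne (by omega)
    have hzj : z j = i := by rw [← hzi, fpf_apply_apply hz]
    have hkine : (k:ℕ) ≠ (i:ℕ) := by
      intro h
      apply hal
      have hlj : l = j := Fin.val_injective (by omega)
      have hkivv : k = i := Fin.val_injective h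
      rw [hkivv, hzi, hlj]
    have hki : k ≠ i := vne hkine
    set z2 := Equiv.swap k l * z * Equiv.swap k l with hz2def
    have hz2f : IsFPF z2 := fpf_conj hz k l
    have hMlt : Mz z2 < Mz z := Mz_lt hz hkl hasc
    have v2k : z2 k = z l := by
      rw [hz2def, conj_app, Equiv.swap_apply_left, Equiv.swap_apply_of_ne_of_ne hbk hbl]
    have v2l : z2 l = z k := by
      rw [hz2def, conj_app, Equiv.swap_apply_right, Equiv.swap_apply_of_ne_of_ne hak hal]
    have hcc2 : Equiv.swap k l * z2 * Equiv.swap k l = z := by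
      rw [hz2def]; exact conj_conj z k l
    have hstep : IsDivDiffB k l (G z2) (G z) := by
      have hh := hG.2 z2 hz2f k l hkl (by rw [v2k]; exact hbl) (by rw [v2l]; exact hak)
        (by rw [v2k, v2l]; exact hasc)
      rwa [hcc2] at hh
    by_cases hc1 : (k:ℕ) = (i:ℕ) + 1
    · -- adjacent case 1 : k = j
      have hkj : k = j := Fin.val_injective (by omega)
      have hlval : (l:ℕ) = (j:ℕ) + 1 := by omega
      have hzkv : z k = i := by rw [hkj, hzj]
      have hbne_i : z l ≠ i := by
        intro h
        have h2 := z.injective (h.trans hzj.symm)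
        have := congrArg Fin.val h2; omega
      have h1 : (i:ℕ) < ((z l : Fin n):ℕ) := by
        have h2 := Fin.lt_def.mp hasc
        rw [hzkv] at h2; exact h2
      have nb1 : ((z l:Fin n):ℕ) ≠ (i:ℕ) := fun h => hbne_i (Fin.val_injective h)
      have nb2 : ((z l:Fin n):ℕ) ≠ (k:ℕ) := fun h => hbk (Fin.val_injective h)
      have nb3 : ((z l:Fin n):ℕ) ≠ (l:ℕ) := fun h => hbl (Fin.val_injective h)
      have hbig : (l:ℕ) < ((z l:Fin n):ℕ) := by omega
      have hil1 : i ≠ l := vne (by omega)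
      have hli1 : l ≠ i := vne (by omega)
      have hlj1 : l ≠ j := vne (by omega)
      have hzlj : z l ≠ j := vne (by omega)
      have hz2i : z2 i = l := by
        rw [hz2def, conj_app, Equiv.swap_apply_of_ne_of_ne hki.symm hil1, hzi,
          ← hkj, Equiv.swap_apply_left]
      have hz2j : z2 j = z l := by rw [← hkj]; exact v2k
      have hasc2 : z2 i < z2 j := by
        rw [Fin.lt_def, hz2i, hz2j]; exact hbig
      set z3 := Equiv.swap i j * z2 * Equiv.swap i j with hz3def
      have hz3f : IsFPF z3 := fpf_conj hz2f i j
      have hM3 : Mz z3 < Mz z2 := Mz_lt hz2f hij hasc2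
      have hz3j : z3 j = l := by
        rw [hz3def, conj_app, Equiv.swap_apply_right, hz2i,
          Equiv.swap_apply_of_ne_of_ne hli1 hlj1]
      have hz3i : z3 i = z l := by
        rw [hz3def, conj_app, Equiv.swap_apply_left, hz2j,
          Equiv.swap_apply_of_ne_of_ne (vne nb1) hzlj]
      have hsym3 : rename ⇑(Equiv.swap j l) (G z3) = G z3 :=
        IH (Mz z3) (by omega) z3 le_rfl hz3f j l hlval hz3j
      have hcc3 : Equiv.swap i j * z3 * Equiv.swap i j = z2 := by
        rw [hz3def]; exact conj_conj z2 i j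
      have hstep2 : IsDivDiffB i j (G z3) (G z2) := by
        have hh := hG.2 z3 hz3f i j hij
          (by rw [hz3i]; exact vne (by omega))
          (by rw [hz3j]; exact vne (by omega))
          (by rw [Fin.lt_def, hz3i, hz3j]; exact hbig)
        rwa [hcc3] at hh
      rw [hkj] at hstep
      exact lemA hijne (vne (by omega)) (vne (by omega)) hsym3 hstep2 hstep
    · by_cases hc2 : (k:ℕ) + 1 = (i:ℕ)
      · -- adjacent case 2 : l = i
        have hli : l = i := Fin.val_injective (by omega)
        have hzl : z l = j := by rw [hli, hzi]
        have hzkv_lt : ((z k : Fin n):ℕ) < (j:ℕ) := by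
          have h2 := Fin.lt_def.mp hasc
          rw [hzl] at h2; exact h2
        have na1 : ((z k:Fin n):ℕ) ≠ (k:ℕ) := fun h => hak (Fin.val_injective h)
        have na2 : ((z k:Fin n):ℕ) ≠ (l:ℕ) := fun h => hal (Fin.val_injective h)
        have hsmall : ((z k:Fin n):ℕ) < (k:ℕ) := by omega
        have hz2i : z2 i = z k := by rw [← hli]; exact v2l
        have hjk2 : j ≠ k := vne (by omega)
        have hjl2 : j ≠ l := vne (by omega)
        have hkj2 : k ≠ j := vne (by omega)
        have hzki : z k ≠ i := vne (by omega)
        have hzkj : z k ≠ j := vne (by omega)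
        have hz2j : z2 j = k := by
          rw [hz2def, conj_app, Equiv.swap_apply_of_ne_of_ne hjk2 hjl2,
            hzj, ← hli, Equiv.swap_apply_right]
        have hasc2 : z2 i < z2 j := by rw [Fin.lt_def, hz2i, hz2j]; exact hsmall
        set z3 := Equiv.swap i j * z2 * Equiv.swap i j with hz3def
        have hz3f : IsFPF z3 := fpf_conj hz2f i j
        have hM3 : Mz z3 < Mz z2 := Mz_lt hz2f hij hasc2
        have hz3k : z3 k = i := by
          rw [hz3def, conj_app, Equiv.swap_apply_of_ne_of_ne hki hkj2,
            v2k, hzl, Equiv.swap_apply_right]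
        have hz3i : z3 i = k := by
          rw [hz3def, conj_app, Equiv.swap_apply_left, hz2j,
            Equiv.swap_apply_of_ne_of_ne hki hkj2]
        have hz3j : z3 j = z k := by
          rw [hz3def, conj_app, Equiv.swap_apply_right, hz2i,
            Equiv.swap_apply_of_ne_of_ne hzki hzkj]
        have hsym3 : rename ⇑(Equiv.swap k l) (G z3) = G z3 :=
          IH (Mz z3) (by omega) z3 le_rfl hz3f k l hkl (by rw [hz3k, hli])
        have hcc3 : Equiv.swap i j * z3 * Equiv.swap i j = z2 := by
          rw [hz3def]; exact conj_conj z2 i j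
        have hstep2 : IsDivDiffB i j (G z3) (G z2) := by
          have hh := hG.2 z3 hz3f i j hij
            (by rw [hz3i]; exact vne (by omega))
            (by rw [hz3j]; exact vne (by omega))
            (by rw [Fin.lt_def, hz3i, hz3j]; omega)
          rwa [hcc3] at hh
        rw [hli] at hstep hsym3
        exact lemB (vne (by omega)) hijne (vne (by omega)) hsym3 hstep2 hstep
      · -- far case
        have hkjne : k ≠ j := vne (by omega)
        have hline : l ≠ i := vne (by omega)
        have hlj : l ≠ j := vne (by omega)
        have hz2i : z2 i = j := by
          rw [hz2def, conj_app, Equiv.swap_apply_of_ne_of_ne hki.symm hline.symm, hzi,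
            Equiv.swap_apply_of_ne_of_ne hkjne.symm hlj.symm]
        have hsym2 : rename ⇑(Equiv.swap i j) (G z2) = G z2 :=
          IH (Mz z2) (by omega) z2 le_rfl hz2f i j hij hz2i
        have hdisj : Equiv.Perm.Disjoint (Equiv.swap i j) (Equiv.swap k l) := by
          intro x
          by_cases hxk : x = k
          · left; subst hxk; exact Equiv.swap_apply_of_ne_of_ne hki hkjne
          by_cases hxl : x = l
          · left; subst hxl; exact Equiv.swap_apply_of_ne_of_ne hline hlj
          · right; exact Equiv.swap_apply_of_ne_of_ne hxk hxl
        have hcomm : ⇑(Equiv.swap i j) ∘ ⇑(Equiv.swap k l)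
            = ⇑(Equiv.swap k l) ∘ ⇑(Equiv.swap i j) := by
          funext x
          have hx := DFunLike.congr_fun (Equiv.Perm.Disjoint.commute hdisj).eq x
          simpa [Equiv.Perm.mul_apply, Function.comp] using hx
        have hQ : rename ⇑(Equiv.swap i j) ((1 + C bb * X l) * G z2)
            = (1 + C bb * X l) * G z2 := by
          rw [map_mul, map_add, map_one, map_mul, rename_C, rename_X,
            Equiv.swap_apply_of_ne_of_ne hline hlj, hsym2]
        unfold IsDivDiffB at hstep
        have hh := congrArg (rename ⇑(Equiv.swap i j)) hstep
        rw [map_mul, map_sub, map_sub, rename_X, rename_X,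
          Equiv.swap_apply_of_ne_of_ne hki hkjne,
          Equiv.swap_apply_of_ne_of_ne hline hlj,
          hQ, rename_rename, hcomm, ← rename_rename, hQ] at hh
        exact cancelX hkl' (hh.trans hstep.symm)


theorem statement1 (n : ℕ) (hpos : 0 < n) (hev : n % 2 = 0)
    (G : Equiv.Perm (Fin n) → MvPolynomial (Fin n) Rb) (hG : IsSpFam n G)
    (z : Equiv.Perm (Fin n)) (hz : IsFPF z)
    (i j : Fin n) (hij : (j : ℕ) = (i : ℕ) + 1) :
    (z i ≠ j → z j ≠ i → z j < z i →
      IsDivDiffB i j (G z) (G (Equiv.swap i j * z * Equiv.swap i j))) ∧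
    (¬(z i ≠ j ∧ z j ≠ i ∧ z j < z i) →
      IsDivDiffB i j (G z) (-(C bb) * G z)) := by
  constructor
  · intro h1 h2 h3
    exact hG.2 z hz i j hij h1 h2 h3
  · intro hnot
    have vne : ∀ {a b : Fin n}, (a:ℕ) ≠ (b:ℕ) → a ≠ b := fun h hab => h (congrArg Fin.val hab)
    have hijne : i ≠ j := vne (by omega)
    have hsym : rename ⇑(Equiv.swap i j) (G z) = G z := by
      by_cases hzi : z i = j
      · exact Gsymm hG (Mz z) z le_rfl hz i j hij hzi
      · have hzj : z j ≠ i := fun h => hzi (by rw [← h, fpf_apply_apply hz])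
        have hlt : z i < z j := by
          have hne : z i ≠ z j := fun h => hijne (z.injective h)
          have hle : ¬ (z j < z i) := fun h => hnot ⟨hzi, hzj, h⟩
          exact lt_of_le_of_ne (not_lt.mp hle) hne
        set z' := Equiv.swap i j * z * Equiv.swap i j with hz'def
        have hz'f : IsFPF z' := fpf_conj hz i j
        have v'i : z' i = z j := by
          rw [hz'def, conj_app, Equiv.swap_apply_left,
            Equiv.swap_apply_of_ne_of_ne hzj (hz.2 j)]
        have v'j : z' j = z i := by
          rw [hz'def, conj_app, Equiv.swap_apply_right,
            Equiv.swap_apply_of_ne_of_ne (hz.2 i) hzi]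
        have hcc : Equiv.swap i j * z' * Equiv.swap i j = z := by
          rw [hz'def]; exact conj_conj z i j
        have hstep : IsDivDiffB i j (G z') (G z) := by
          have hh := hG.2 z' hz'f i j hij (by rw [v'i]; exact hz.2 j)
            (by rw [v'j]; exact hz.2 i) (by rw [v'i, v'j]; exact hlt)
          rwa [hcc] at hh
        unfold IsDivDiffB at hstep
        have hh := congrArg (rename ⇑(Equiv.swap i j)) hstep
        rw [map_mul, map_sub, map_sub, rename_X, rename_X, Equiv.swap_apply_left,
          Equiv.swap_apply_right, ren_invol] at hh
        apply cancelX hijne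
        linear_combination -hh - hstep
    unfold IsDivDiffB
    rw [map_mul, map_add, map_one, map_mul, rename_C, rename_X, Equiv.swap_apply_right, hsym]
    ring


end
end

section
/- Let n be a positive even integer and z ∈ I^FPF_n. Let {𝔊^Sp_y}_{y ∈ I^FPF_n} ⊆ ℤ[β][x_1,…,x_n] and {𝔊^Sp_y}_{y ∈ I^FPF_{n+2}} ⊆ ℤ[β][x_1,…,x_{n+2}] be the respective unique families of symplectic Grothendieck polynomials. Then, under the natural inclusion ℤ[β][x_1,…,x_n] ⊆ ℤ[β][x_1,…,x_{n+2}], 𝔊^Sp_{z×21} = 𝔊^Sp_z. -/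
open MvPolynomial

noncomputable section

namespace SPAux

/-! ### Basic lemmas about `oplus`, `rename`, and divided differences -/

lemma oplus_comm {N : ℕ} (i j : Fin N) : oplus i j = oplus j i := by
  unfold oplus; ring

lemma rename_oplus {N M : ℕ} (f : Fin N → Fin M) (i j : Fin N) :
    rename f (oplus i j) = oplus (f i) (f j) := by
  simp [oplus]

lemma swap_val {N : ℕ} (i j x : Fin N) :
    ((Equiv.swap i j x : Fin N) : ℕ) =
      if (x : ℕ) = (i : ℕ) then (j : ℕ) else if (x : ℕ) = (j : ℕ) then (i : ℕ) else (x : ℕ) := by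
  rw [Equiv.swap_apply_def, apply_ite (Fin.val), apply_ite (Fin.val)]
  simp [Fin.ext_iff]

lemma X_ne {N : ℕ} {i j : Fin N} (h : i ≠ j) :
    (X i - X j : MvPolynomial (Fin N) Rb) ≠ 0 :=
  sub_ne_zero_of_ne (fun he => h (MvPolynomial.X_injective he))

lemma ddb_unique {N : ℕ} {i j : Fin N} (hij : i ≠ j) {f g g' : MvPolynomial (Fin N) Rb}
    (h1 : IsDivDiffB i j f g) (h2 : IsDivDiffB i j f g') : g = g' := by
  unfold IsDivDiffB at h1 h2
  exact mul_left_cancel₀ (X_ne hij) (h1.trans h2.symm)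

lemma swap_comp {N M : ℕ} {e : Fin N → Fin M} (he : Function.Injective e) (i j x : Fin N) :
    Equiv.swap (e i) (e j) (e x) = e (Equiv.swap i j x) := by
  rcases eq_or_ne x i with rfl | hxi
  · rw [Equiv.swap_apply_left, Equiv.swap_apply_left]
  rcases eq_or_ne x j with rfl | hxj
  · rw [Equiv.swap_apply_right, Equiv.swap_apply_right]
  · rw [Equiv.swap_apply_of_ne_of_ne (he.ne hxi) (he.ne hxj),
      Equiv.swap_apply_of_ne_of_ne hxi hxj]

lemma ddb_rename {N M : ℕ} {e : Fin N → Fin M} (he : Function.Injective e) {i j : Fin N}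
    {f g : MvPolynomial (Fin N) Rb} (h : IsDivDiffB i j f g) :
    IsDivDiffB (e i) (e j) (rename e f) (rename e g) := by
  unfold IsDivDiffB at h ⊢
  have hc : ⇑(Equiv.swap (e i) (e j)) ∘ e = e ∘ ⇑(Equiv.swap i j) := by
    funext x; exact swap_comp he i j x
  have h1 : (1 + C bb * X (e j)) * rename e f = rename e ((1 + C bb * X j) * f) := by
    simp
  calc (X (e i) - X (e j)) * rename e g = rename e ((X i - X j) * g) := by simp
    _ = rename e ((1 + C bb * X j) * f -
          rename (⇑(Equiv.swap i j)) ((1 + C bb * X j) * f)) := by rw [h]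
    _ = _ := by rw [map_sub, rename_rename, ← hc, ← rename_rename, ← h1]

lemma core_ddb {N : ℕ} (i j c : Fin N) (hci : c ≠ i) (hcj : c ≠ j)
    {M : MvPolynomial (Fin N) Rb} (hM : rename ⇑(Equiv.swap i j) M = M) :
    IsDivDiffB i j (oplus c i * M) M := by
  unfold IsDivDiffB
  have hr : rename ⇑(Equiv.swap i j) ((1 + C bb * X j) * (oplus c i * M)) =
      (1 + C bb * X i) * (oplus c j * M) := by
    simp only [map_mul, map_add, map_one, rename_X, rename_oplus, hM,
      Equiv.swap_apply_left, Equiv.swap_apply_right, rename_C,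
      Equiv.swap_apply_of_ne_of_ne hci hcj]
  rw [hr]
  unfold oplus
  ring

/-! ### The interpolating products `Pp` -/

/-- Index set of the product `Pp n k`. -/
def Sset (n k : ℕ) : Finset (Fin (n+2) × Fin (n+2)) :=
  Finset.univ.filter (fun p : Fin (n+2) × Fin (n+2) => p.1 < p.2 ∧
    ((p.1 : ℕ) + (p.2 : ℕ) + 2 ≤ n ∨
     ((p.1 : ℕ) + (p.2 : ℕ) + 2 = n + 1 ∧ k < (p.2 : ℕ) + 1) ∨
     ((p.1 : ℕ) + (p.2 : ℕ) + 2 = n + 2 ∧ k < (p.1 : ℕ) + 1)))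

def Pp (n k : ℕ) : MvPolynomial (Fin (n+2)) Rb := ∏ p ∈ Sset n k, oplus p.1 p.2

lemma Pp_zero (n : ℕ) : Pp n 0 = spTop (n+2) := by
  unfold Pp spTop Sset
  apply Finset.prod_congr _ (fun _ _ => rfl)
  ext p
  simp only [Finset.mem_filter, Finset.mem_univ, true_and, and_congr_right_iff]
  intro _
  omega

lemma mem_Sset_lt {n k : ℕ} {p : Fin (n+2) × Fin (n+2)} (hp : p ∈ Sset n k) :
    p.1 < p.2 := by
  simp only [Sset, Finset.mem_filter, Finset.mem_univ, true_and] at hp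
  exact hp.1

lemma Pp_last (n : ℕ) : Pp n n = rename (Fin.castLE (Nat.le_add_right n 2)) (spTop n) := by
  unfold Pp spTop
  rw [map_prod]
  have hbnd : ∀ p ∈ Sset n n, ((p.1 : ℕ) < n ∧ (p.2 : ℕ) < n) := by
    intro p hp
    simp only [Sset, Finset.mem_filter, Finset.mem_univ, true_and, Fin.lt_def] at hp
    omega
  refine Finset.prod_bij'
    (fun p hp => ((⟨(p.1 : ℕ), (hbnd p hp).1⟩ : Fin n), (⟨(p.2 : ℕ), (hbnd p hp).2⟩ : Fin n)))
    (fun q _ => (Fin.castLE (Nat.le_add_right n 2) q.1, Fin.castLE (Nat.le_add_right n 2) q.2))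
    ?_ ?_ ?_ ?_ ?_
  · intro p hp
    have h2 := hbnd p hp
    simp only [Sset, Finset.mem_filter, Finset.mem_univ, true_and, Fin.lt_def] at hp ⊢
    omega
  · intro q hq
    have h1 := q.1.isLt
    have h2 := q.2.isLt
    simp only [Finset.mem_filter, Finset.mem_univ, true_and, Fin.lt_def] at hq
    simp only [Sset, Finset.mem_filter, Finset.mem_univ, true_and, Fin.lt_def,
      Fin.coe_castLE]
    omega
  · intro p hp
    simp [Prod.ext_iff, Fin.ext_iff]
  · intro q hq
    simp [Prod.ext_iff, Fin.ext_iff]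
  · intro p hp
    rw [rename_oplus]
    rfl

/-- The distinguished extra variable for the step from `Pp n (k+1)` to `Pp n k`. -/
def cpt (n k : ℕ) (hk : k + 1 ≤ n) : Fin (n + 2) :=
  if 2 * (k + 1) ≤ n then ⟨n - k, by omega⟩ else ⟨n - k - 1, by omega⟩

lemma cpt_ne_i (n k : ℕ) (hk : k + 1 ≤ n) (hev : n % 2 = 0) :
    cpt n k hk ≠ (⟨k, by omega⟩ : Fin (n+2)) := by
  unfold cpt; split_ifs <;> simp [Fin.ext_iff] <;> omega

lemma cpt_ne_j (n k : ℕ) (hk : k + 1 ≤ n) (hev : n % 2 = 0) :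
    cpt n k hk ≠ (⟨k + 1, by omega⟩ : Fin (n+2)) := by
  unfold cpt; split_ifs <;> simp [Fin.ext_iff] <;> omega

/-- The extra factor's index pair for the step from `Pp n (k+1)` to `Pp n k`. -/
def qpair (n k : ℕ) (hk : k + 1 ≤ n) : Fin (n+2) × Fin (n+2) :=
  if 2 * (k + 1) ≤ n then ((⟨k, by omega⟩ : Fin (n+2)), (⟨n - k, by omega⟩ : Fin (n+2)))
  else ((⟨n - k - 1, by omega⟩ : Fin (n+2)), (⟨k, by omega⟩ : Fin (n+2)))

lemma qpair_not_mem (n k : ℕ) (hk : k + 1 ≤ n) (hev : n % 2 = 0) :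
    qpair n k hk ∉ Sset n (k+1) := by
  simp only [Sset, Finset.mem_filter, Finset.mem_univ, true_and, Fin.lt_def, qpair]
  split_ifs <;> simp <;> omega

lemma Sset_eq (n k : ℕ) (hk : k + 1 ≤ n) (hev : n % 2 = 0) :
    Sset n k = insert (qpair n k hk) (Sset n (k+1)) := by
  ext p
  simp only [Sset, Finset.mem_filter, Finset.mem_univ, true_and, Finset.mem_insert,
    Fin.lt_def, qpair]
  split_ifs <;> simp [Prod.ext_iff, Fin.ext_iff] <;> omega

lemma Pp_step (n k : ℕ) (hk : k + 1 ≤ n) (hev : n % 2 = 0) :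
    Pp n k = oplus (cpt n k hk) ⟨k, by omega⟩ * Pp n (k+1) := by
  unfold Pp
  rw [Sset_eq n k hk hev, Finset.prod_insert (qpair_not_mem n k hk hev)]
  refine congrArg (fun t => t * ∏ p ∈ Sset n (k+1), oplus p.1 p.2) ?_
  by_cases h : 2 * (k + 1) ≤ n
  · simp only [qpair, cpt, if_pos h]
    exact oplus_comm _ _
  · simp only [qpair, cpt, if_neg h]

/-- Reordering map used to show `Pp` is symmetric in adjacent variables. -/
def Fmap {N : ℕ} (sg : Equiv.Perm (Fin N)) (p : Fin N × Fin N) : Fin N × Fin N :=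
  if sg p.1 < sg p.2 then (sg p.1, sg p.2) else (sg p.2, sg p.1)

lemma Fmap_invol {N : ℕ} (sg : Equiv.Perm (Fin N)) (hss : ∀ x, sg (sg x) = x)
    (p : Fin N × Fin N) (hp : p.1 < p.2) : Fmap sg (Fmap sg p) = p := by
  unfold Fmap
  by_cases h1 : sg p.1 < sg p.2
  · simp only [if_pos h1, hss, if_pos hp]
  · simp only [if_neg h1, hss, if_neg (asymm hp : ¬ p.2 < p.1)]

lemma Fmap_mem (n k : ℕ) (hk : k + 1 ≤ n) (p : Fin (n+2) × Fin (n+2))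
    (hp : p ∈ Sset n (k+1)) :
    Fmap (Equiv.swap (⟨k, by omega⟩ : Fin (n+2)) ⟨k+1, by omega⟩) p ∈ Sset n (k+1) := by
  set i : Fin (n+2) := ⟨k, by omega⟩ with hidef
  set j : Fin (n+2) := ⟨k+1, by omega⟩ with hjdef
  have e1 := swap_val i j p.1
  have e2 := swap_val i j p.2
  have hiv : (i : ℕ) = k := rfl
  have hjv : (j : ℕ) = k + 1 := rfl
  rw [hiv, hjv] at e1 e2
  simp only [Sset, Finset.mem_filter, Finset.mem_univ, true_and, Fin.lt_def] at hp
  unfold Fmap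
  split_ifs with h
  · rw [Fin.lt_def] at h
    simp only [Sset, Finset.mem_filter, Finset.mem_univ, true_and, Fin.lt_def]
    split_ifs at e1 e2 <;> omega
  · rw [Fin.lt_def, not_lt] at h
    simp only [Sset, Finset.mem_filter, Finset.mem_univ, true_and, Fin.lt_def]
    split_ifs at e1 e2 <;> omega

lemma Pp_symm (n k : ℕ) (hk : k + 1 ≤ n) (hev : n % 2 = 0) :
    rename ⇑(Equiv.swap (⟨k, by omega⟩ : Fin (n+2)) ⟨k+1, by omega⟩) (Pp n (k+1)) =
      Pp n (k+1) := by
  set i : Fin (n+2) := ⟨k, by omega⟩ with hidef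
  set j : Fin (n+2) := ⟨k+1, by omega⟩ with hjdef
  have hss : ∀ x, Equiv.swap i j (Equiv.swap i j x) = x := fun x => Equiv.swap_apply_self i j x
  unfold Pp
  rw [map_prod]
  simp only [rename_oplus]
  refine Finset.prod_bij' (fun p _ => Fmap (Equiv.swap i j) p)
    (fun p _ => Fmap (Equiv.swap i j) p)
    (fun p hp => Fmap_mem n k hk p hp) (fun p hp => Fmap_mem n k hk p hp)
    (fun p hp => Fmap_invol _ hss p (mem_Sset_lt hp))
    (fun p hp => Fmap_invol _ hss p (mem_Sset_lt hp)) ?_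
  intro p hp
  show oplus (Equiv.swap i j p.1) (Equiv.swap i j p.2) =
    oplus (Fmap (Equiv.swap i j) p).1 (Fmap (Equiv.swap i j) p).2
  unfold Fmap
  split_ifs with h
  · rfl
  · exact oplus_comm _ _

/-! ### The chain of involutions from `revPerm (n+2)` down to `revPerm n × 21` -/

def wfn (n k : ℕ) (m : Fin (n+2)) : Fin (n+2) :=
  ⟨if (m : ℕ) = k then n+1 else if (m : ℕ) = n+1 then min k n else
      (if n - 1 - (if (m : ℕ) < k then (m : ℕ) else (m : ℕ) - 1) < k
       then n - 1 - (if (m : ℕ) < k then (m : ℕ) else (m : ℕ) - 1)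
       else n - (if (m : ℕ) < k then (m : ℕ) else (m : ℕ) - 1)), by
    have := m.isLt; split_ifs <;> omega⟩

lemma wfn_val (n k : ℕ) (m : Fin (n+2)) :
    ((wfn n k m : Fin (n+2)) : ℕ) =
      if (m : ℕ) = k then n+1 else if (m : ℕ) = n+1 then min k n else
      (if n - 1 - (if (m : ℕ) < k then (m : ℕ) else (m : ℕ) - 1) < k
       then n - 1 - (if (m : ℕ) < k then (m : ℕ) else (m : ℕ) - 1)
       else n - (if (m : ℕ) < k then (m : ℕ) else (m : ℕ) - 1)) := rfl

lemma wfn_invol (n k : ℕ) (hk : k ≤ n) (hev : n % 2 = 0) :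
    Function.Involutive (wfn n k) := by
  intro m
  have hm := m.isLt
  have hb := (wfn n k m).isLt
  apply Fin.ext
  have t1 := wfn_val n k m
  have t2 := wfn_val n k (wfn n k m)
  split_ifs at t1 <;> split_ifs at t2 <;> omega

def wperm (n k : ℕ) (hk : k ≤ n) (hev : n % 2 = 0) : Equiv.Perm (Fin (n+2)) :=
  Function.Involutive.toPerm (wfn n k) (wfn_invol n k hk hev)

lemma wperm_apply (n k : ℕ) (hk : k ≤ n) (hev : n % 2 = 0) (m : Fin (n+2)) :
    wperm n k hk hev m = wfn n k m := rfl

lemma w_zero (n : ℕ) (hev : n % 2 = 0) :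
    wperm n 0 (Nat.zero_le n) hev = revPerm (n+2) := by
  apply Equiv.ext; intro m
  apply Fin.ext
  have hm := m.isLt
  have h2 : ((revPerm (n+2)) m : ℕ) = ((Fin.rev m : Fin (n+2)) : ℕ) := rfl
  rw [wperm_apply, wfn_val, h2, Fin.val_rev]
  split_ifs <;> omega

lemma w_fpf (n k : ℕ) (hk : k ≤ n) (hev : n % 2 = 0) : IsFPF (wperm n k hk hev) := by
  constructor
  · apply Equiv.ext; intro m
    have := wfn_invol n k hk hev m
    simpa [Equiv.Perm.mul_apply, wperm_apply] using this
  · intro m heq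
    have hm := m.isLt
    have hv : ((wperm n k hk hev m : Fin (n+2)) : ℕ) = (m : ℕ) := by rw [heq]
    rw [wperm_apply, wfn_val] at hv
    split_ifs at hv <;> omega

lemma w_descent (n k : ℕ) (hk : k + 1 ≤ n) (hev : n % 2 = 0) (hk' : k ≤ n)
    (i j : Fin (n+2)) (hi : (i : ℕ) = k) (hj : (j : ℕ) = k + 1) :
    wperm n k hk' hev i ≠ j ∧
    wperm n k hk' hev j ≠ i ∧
    wperm n k hk' hev j < wperm n k hk' hev i := by
  have t1 := wfn_val n k i
  have t2 := wfn_val n k j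
  rw [hi] at t1
  rw [hj] at t2
  have H1 : ((wfn n k i : Fin (n+2)) : ℕ) ≠ k + 1 := by
    split_ifs at t1 <;> omega
  have H2 : ((wfn n k j : Fin (n+2)) : ℕ) ≠ k := by
    split_ifs at t2 <;> omega
  have H3 : ((wfn n k j : Fin (n+2)) : ℕ) < ((wfn n k i : Fin (n+2)) : ℕ) := by
    split_ifs at t1 <;> split_ifs at t2 <;> omega
  refine ⟨fun h => H1 ?_, fun h => H2 ?_, ?_⟩
  · rw [wperm_apply] at h
    rw [h, hj]
  · rw [wperm_apply] at h
    rw [h, hi]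
  · rw [Fin.lt_def, wperm_apply, wperm_apply]
    exact H3

set_option maxHeartbeats 1600000 in
lemma w_conj (n k : ℕ) (hk : k + 1 ≤ n) (hev : n % 2 = 0) (hk' : k ≤ n)
    (i j : Fin (n+2)) (hi : (i : ℕ) = k) (hj : (j : ℕ) = k + 1) :
    Equiv.swap i j * wperm n k hk' hev * Equiv.swap i j = wperm n (k+1) hk hev := by
  apply Equiv.ext; intro m
  apply Fin.ext
  have hm := m.isLt
  have hsm := (Equiv.swap i j m).isLt
  have hwm := (wfn n k (Equiv.swap i j m)).isLt
  have s1 := swap_val i j m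
  have t1 := wfn_val n k (Equiv.swap i j m)
  have s2 := swap_val i j (wfn n k (Equiv.swap i j m))
  have t2 := wfn_val n (k+1) m
  rw [hi, hj] at s1 s2
  show ((Equiv.swap i j) ((wperm n k hk' hev) ((Equiv.swap i j) m)) : ℕ) =
    ((wperm n (k+1) hk hev m : Fin (n+2)) : ℕ)
  rw [wperm_apply, wperm_apply]
  split_ifs at s1 <;> split_ifs at t1 <;> split_ifs at s2 <;> split_ifs at t2 <;> omega

/-! ### `extPerm` lemmas -/

lemma extPerm_castAdd {m l : ℕ} (z : Equiv.Perm (Fin m)) (w : Equiv.Perm (Fin l)) (a : Fin m) :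
    extPerm z w (Fin.castAdd l a) = Fin.castAdd l (z a) := by
  simp [extPerm, finSumFinEquiv_symm_apply_castAdd]

lemma extPerm_natAdd {m l : ℕ} (z : Equiv.Perm (Fin m)) (w : Equiv.Perm (Fin l)) (b : Fin l) :
    extPerm z w (Fin.natAdd m b) = Fin.natAdd m (w b) := by
  simp [extPerm, finSumFinEquiv_symm_apply_natAdd]

lemma extPerm_val_lt {m l : ℕ} (z : Equiv.Perm (Fin m)) (w : Equiv.Perm (Fin l))
    (x : Fin (m+l)) (h : (x : ℕ) < m) :
    ((extPerm z w x : Fin (m+l)) : ℕ) = (z ⟨(x : ℕ), h⟩ : ℕ) := by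
  have hx : x = Fin.castAdd l ⟨(x : ℕ), h⟩ := Fin.ext rfl
  conv_lhs => rw [hx, extPerm_castAdd]
  rfl

lemma extPerm_val_ge {m l : ℕ} (z : Equiv.Perm (Fin m)) (w : Equiv.Perm (Fin l))
    (x : Fin (m+l)) (h : m ≤ (x : ℕ)) :
    ((extPerm z w x : Fin (m+l)) : ℕ) =
      m + (w ⟨(x : ℕ) - m, by have := x.isLt; omega⟩ : ℕ) := by
  have hx : x = Fin.natAdd m ⟨(x : ℕ) - m, by have := x.isLt; omega⟩ := Fin.ext (by
    show (x : ℕ) = m + ((x : ℕ) - m)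
    omega)
  conv_lhs => rw [hx, extPerm_natAdd]
  rfl

lemma swap01_val (x : Fin 2) :
    ((Equiv.swap (0 : Fin 2) 1 x : Fin 2) : ℕ) = 1 - (x : ℕ) := by
  have := swap_val (0 : Fin 2) 1 x
  have h0 : ((0 : Fin 2) : ℕ) = 0 := rfl
  have h1 : ((1 : Fin 2) : ℕ) = 1 := rfl
  rw [h0, h1] at this
  have hx := x.isLt
  rw [this]
  split_ifs <;> omega

lemma w_last (n : ℕ) (hev : n % 2 = 0) :
    wperm n n le_rfl hev = extPerm (revPerm n) (Equiv.swap (0 : Fin 2) 1) := by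
  apply Equiv.ext; intro m
  apply Fin.ext
  have hm := m.isLt
  have t1 := wfn_val n n m
  rw [show ((wperm n n le_rfl hev) m) = wfn n n m from rfl]
  by_cases h : (m : ℕ) < n
  · rw [extPerm_val_lt _ _ m h]
    have h2 : ((revPerm n (⟨(m : ℕ), h⟩ : Fin n)) : ℕ) =
        n - (((⟨(m : ℕ), h⟩ : Fin n) : ℕ) + 1) := Fin.val_rev _
    have h3 : ((⟨(m : ℕ), h⟩ : Fin n) : ℕ) = (m : ℕ) := rfl
    split_ifs at t1 <;> omega
  · have hr : ((extPerm (revPerm n) (Equiv.swap (0 : Fin 2) 1) m : Fin (n+2)) : ℕ) =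
        2 * n + 1 - (m : ℕ) := by
      rcases (by omega : (m : ℕ) = n ∨ (m : ℕ) = n + 1) with hc | hc
      · have hmeq : m = Fin.natAdd n (0 : Fin 2) := Fin.ext (by
          show (m : ℕ) = n + ((0 : Fin 2) : ℕ)
          omega)
        rw [hmeq, extPerm_natAdd, Equiv.swap_apply_left]
        show n + ((1 : Fin 2) : ℕ) = 2 * n + 1 - (n + ((0 : Fin 2) : ℕ))
        omega
      · have hmeq : m = Fin.natAdd n (1 : Fin 2) := Fin.ext (by
          show (m : ℕ) = n + ((1 : Fin 2) : ℕ)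
          omega)
        rw [hmeq, extPerm_natAdd, Equiv.swap_apply_right]
        show n + ((0 : Fin 2) : ℕ) = 2 * n + 1 - (n + ((1 : Fin 2) : ℕ))
        omega
    rw [hr]
    split_ifs at t1 <;> omega

/-! ### The chain computation -/

lemma fin_mk_ne {N : ℕ} {a b : ℕ} (ha : a < N) (hb : b < N) (h : a ≠ b) :
    (⟨a, ha⟩ : Fin N) ≠ ⟨b, hb⟩ := by
  simp [Fin.ext_iff, h]

lemma chain (n : ℕ) (hev : n % 2 = 0)
    (G' : Equiv.Perm (Fin (n+2)) → MvPolynomial (Fin (n+2)) Rb) (hG' : IsSpFam (n+2) G') :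
    ∀ k, (hk : k ≤ n) → G' (wperm n k hk hev) = Pp n k := by
  intro k
  induction k with
  | zero =>
    intro hk
    rw [w_zero n hev, hG'.1, Pp_zero]
  | succ k ih =>
    intro hk
    have hk' : k ≤ n := by omega
    have hd := w_descent n k hk hev hk' ⟨k, by omega⟩ ⟨k+1, by omega⟩ rfl rfl
    have h1 := hG'.2 (wperm n k hk' hev) (w_fpf n k hk' hev)
      ⟨k, by omega⟩ ⟨k+1, by omega⟩ rfl hd.1 hd.2.1 hd.2.2
    rw [w_conj n k hk hev hk' ⟨k, by omega⟩ ⟨k+1, by omega⟩ rfl rfl, ih hk'] at h1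
    have h2 : IsDivDiffB (⟨k, by omega⟩ : Fin (n+2)) ⟨k+1, by omega⟩ (Pp n k) (Pp n (k+1)) := by
      rw [Pp_step n k hk hev]
      exact core_ddb _ _ _ (cpt_ne_i n k hk hev) (cpt_ne_j n k hk hev) (Pp_symm n k hk hev)
    exact ddb_unique (fin_mk_ne _ _ (by omega)) h1 h2

/-! ### `extPerm` algebra -/

lemma castLE_inj (n : ℕ) : Function.Injective (Fin.castLE (Nat.le_add_right n 2)) :=
  fun a b h => Fin.ext (by simpa using congrArg Fin.val h)

lemma extPerm_castLE {n : ℕ} (z : Equiv.Perm (Fin n)) (w : Equiv.Perm (Fin 2)) (a : Fin n) :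
    extPerm z w (Fin.castLE (Nat.le_add_right n 2) a) =
      Fin.castLE (Nat.le_add_right n 2) (z a) :=
  extPerm_castAdd z w a

lemma extPerm_mul {m l : ℕ} (z z' : Equiv.Perm (Fin m)) (w w' : Equiv.Perm (Fin l)) :
    extPerm z w * extPerm z' w' = extPerm (z * z') (w * w') := by
  apply Equiv.ext; intro x
  show (extPerm z w) ((extPerm z' w') x) = _
  unfold extPerm
  simp only [Equiv.trans_apply, Equiv.symm_apply_apply]
  cases finSumFinEquiv.symm x <;>
    simp [Equiv.sumCongr_apply, Equiv.Perm.mul_apply]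

lemma extPerm_one {m l : ℕ} : extPerm (1 : Equiv.Perm (Fin m)) (1 : Equiv.Perm (Fin l)) = 1 := by
  apply Equiv.ext; intro x
  show finSumFinEquiv (Equiv.sumCongr 1 1 (finSumFinEquiv.symm x)) = x
  rcases hsx : finSumFinEquiv.symm x with a | b
  · have : Equiv.sumCongr (1 : Equiv.Perm (Fin m)) (1 : Equiv.Perm (Fin l)) (Sum.inl a) =
        Sum.inl a := by simp
    rw [this, ← hsx, Equiv.apply_symm_apply]
  · have : Equiv.sumCongr (1 : Equiv.Perm (Fin m)) (1 : Equiv.Perm (Fin l)) (Sum.inr b) =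
        Sum.inr b := by simp
    rw [this, ← hsx, Equiv.apply_symm_apply]

lemma swap_ext (n : ℕ) (i j : Fin n) :
    Equiv.swap (Fin.castLE (Nat.le_add_right n 2) i) (Fin.castLE (Nat.le_add_right n 2) j) =
      extPerm (Equiv.swap i j) (1 : Equiv.Perm (Fin 2)) := by
  apply Equiv.ext; intro x
  by_cases h : (x : ℕ) < n
  · have hx : x = Fin.castAdd 2 (⟨(x : ℕ), h⟩ : Fin n) := Fin.ext rfl
    rw [hx, extPerm_castAdd]
    exact swap_comp (castLE_inj n) i j ⟨(x : ℕ), h⟩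
  · have hi' : x ≠ Fin.castLE (Nat.le_add_right n 2) i := fun hc => h (by rw [hc]; exact i.isLt)
    have hj' : x ≠ Fin.castLE (Nat.le_add_right n 2) j := fun hc => h (by rw [hc]; exact j.isLt)
    rw [Equiv.swap_apply_of_ne_of_ne hi' hj']
    have hx : x = Fin.natAdd n (⟨(x : ℕ) - n, by have := x.isLt; omega⟩ : Fin 2) := Fin.ext (by
      show (x : ℕ) = n + ((x : ℕ) - n)
      omega)
    conv_rhs => rw [hx, extPerm_natAdd]
    rw [Equiv.Perm.one_apply]
    exact hx

lemma extPerm_conj (n : ℕ) (z : Equiv.Perm (Fin n)) (i j : Fin n) :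
    Equiv.swap (Fin.castLE (Nat.le_add_right n 2) i) (Fin.castLE (Nat.le_add_right n 2) j) *
        extPerm z (Equiv.swap (0 : Fin 2) 1) *
        Equiv.swap (Fin.castLE (Nat.le_add_right n 2) i) (Fin.castLE (Nat.le_add_right n 2) j) =
      extPerm (Equiv.swap i j * z * Equiv.swap i j) (Equiv.swap (0 : Fin 2) 1) := by
  rw [swap_ext, extPerm_mul, extPerm_mul, one_mul, mul_one]

lemma fpf_ext (n : ℕ) (z : Equiv.Perm (Fin n)) (hz : IsFPF z) :
    IsFPF (extPerm z (Equiv.swap (0 : Fin 2) 1)) := by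
  constructor
  · rw [extPerm_mul, hz.1, Equiv.swap_mul_self]
    exact extPerm_one
  · intro m hme
    have hv := congrArg Fin.val hme
    by_cases h : (m : ℕ) < n
    · rw [extPerm_val_lt _ _ m h] at hv
      exact hz.2 ⟨(m : ℕ), h⟩ (Fin.ext hv)
    · rw [extPerm_val_ge _ _ m (le_of_not_gt h)] at hv
      rw [swap01_val] at hv
      have h2 : n + (1 - ((m : ℕ) - n)) = (m : ℕ) := hv
      have hm := m.isLt
      omega

/-! ### Ascents of fixed-point-free involutions -/

lemma invol_apply {n : ℕ} {z : Equiv.Perm (Fin n)} (h : z * z = 1) (x : Fin n) :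
    z (z x) = x := by
  have : (z * z) x = (1 : Equiv.Perm (Fin n)) x := by rw [h]
  simpa [Equiv.Perm.mul_apply] using this

lemma ascent_facts {n : ℕ} (z : Equiv.Perm (Fin n)) (hz : IsFPF z) (i j : Fin n)
    (hij : (j : ℕ) = (i : ℕ) + 1) (ha : z i < z j) :
    z i ≠ j ∧ z j ≠ i ∧
    (Equiv.swap i j * z * Equiv.swap i j) i = z j ∧
    (Equiv.swap i j * z * Equiv.swap i j) j = z i ∧
    IsFPF (Equiv.swap i j * z * Equiv.swap i j) := by
  have hzz := fun x => invol_apply hz.1 x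
  have h1 : z i ≠ j := by
    intro h
    have h2 : z j = i := by rw [← h, hzz]
    rw [h, h2, Fin.lt_def] at ha
    omega
  have h2 : z j ≠ i := by
    intro h
    have h3 : z i = j := by rw [← h, hzz]
    rw [h, h3, Fin.lt_def] at ha
    omega
  have e1 : (Equiv.swap i j * z * Equiv.swap i j) i = z j := by
    rw [Equiv.Perm.mul_apply, Equiv.Perm.mul_apply, Equiv.swap_apply_left,
      Equiv.swap_apply_of_ne_of_ne h2 (hz.2 j)]
  have e2 : (Equiv.swap i j * z * Equiv.swap i j) j = z i := by
    rw [Equiv.Perm.mul_apply, Equiv.Perm.mul_apply, Equiv.swap_apply_right,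
      Equiv.swap_apply_of_ne_of_ne (hz.2 i) h1]
  refine ⟨h1, h2, e1, e2, ?_, ?_⟩
  · apply Equiv.ext; intro m
    simp [Equiv.Perm.mul_apply, Equiv.swap_apply_self, hzz]
  · intro m hm
    have hfix : z (Equiv.swap i j m) = Equiv.swap i j m := by
      have := congrArg (Equiv.swap i j) hm
      simpa [Equiv.Perm.mul_apply, Equiv.swap_apply_self] using this
    exact hz.2 _ hfix

/-! ### The measure -/

def msr {n : ℕ} (z : Equiv.Perm (Fin n)) : ℕ := ∑ x : Fin n, (x : ℕ) * ((z x : Fin n) : ℕ)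

lemma msr_conj_lt {n : ℕ} (z : Equiv.Perm (Fin n)) (hz : IsFPF z) (i j : Fin n)
    (hij : (j : ℕ) = (i : ℕ) + 1) (ha : z i < z j) :
    msr (Equiv.swap i j * z * Equiv.swap i j) < msr z := by
  have hzz := fun x => invol_apply hz.1 x
  obtain ⟨h1, h2, _, _, _⟩ := ascent_facts z hz i j hij ha
  have hne0 : i ≠ j := by intro h; rw [h] at hij; omega
  have hia : i ≠ z i := fun h => (hz.2 i) h.symm
  have hja : j ≠ z i := fun h => h1 h.symm
  have hib : i ≠ z j := fun h => h2 h.symm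
  have hjb : j ≠ z j := fun h => (hz.2 j) h.symm
  have hab : z i ≠ z j := fun h => hne0 (z.injective h)
  have hre : msr (Equiv.swap i j * z * Equiv.swap i j) =
      ∑ x : Fin n, ((Equiv.swap i j x : Fin n) : ℕ) * ((Equiv.swap i j (z x) : Fin n) : ℕ) := by
    rw [msr, ← Equiv.sum_comp (Equiv.swap i j)
      (fun x => (x : ℕ) * (((Equiv.swap i j * z * Equiv.swap i j) x : Fin n) : ℕ))]
    apply Finset.sum_congr rfl
    intro x _
    simp [Equiv.Perm.mul_apply, Equiv.swap_apply_self]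
  rw [hre, msr]
  set A : Finset (Fin n) := insert i (insert j (insert (z i) {z j})) with hA
  have hmem : ∀ x : Fin n, x ∉ A → x ≠ i ∧ x ≠ j ∧ x ≠ z i ∧ x ≠ z j := by
    intro x hx
    simp only [hA, Finset.mem_insert, Finset.mem_singleton, not_or] at hx
    exact hx
  rw [← Finset.sum_add_sum_compl A (fun x => ((Equiv.swap i j x : Fin n) : ℕ) *
        ((Equiv.swap i j (z x) : Fin n) : ℕ)),
      ← Finset.sum_add_sum_compl A (fun x => (x : ℕ) * ((z x : Fin n) : ℕ))]
  have hoff : ∑ x ∈ Aᶜ, ((Equiv.swap i j x : Fin n) : ℕ) * ((Equiv.swap i j (z x) : Fin n) : ℕ) =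
      ∑ x ∈ Aᶜ, (x : ℕ) * ((z x : Fin n) : ℕ) := by
    apply Finset.sum_congr rfl
    intro x hx
    obtain ⟨hxi, hxj, hxa, hxb⟩ := hmem x (Finset.mem_compl.mp hx)
    have hz1 : z x ≠ i := fun h => hxa (by conv_lhs => rw [← hzz x]; rw [h])
    have hz2 : z x ≠ j := fun h => hxb (by conv_lhs => rw [← hzz x]; rw [h])
    rw [Equiv.swap_apply_of_ne_of_ne hxi hxj, Equiv.swap_apply_of_ne_of_ne hz1 hz2]
  rw [hoff]
  apply Nat.add_lt_add_right
  have hnotin1 : i ∉ insert j (insert (z i) ({z j} : Finset (Fin n))) := by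
    simp only [Finset.mem_insert, Finset.mem_singleton, not_or]
    exact ⟨hne0, hia, hib⟩
  have hnotin2 : j ∉ insert (z i) ({z j} : Finset (Fin n)) := by
    simp only [Finset.mem_insert, Finset.mem_singleton, not_or]
    exact ⟨hja, hjb⟩
  have hnotin3 : z i ∉ ({z j} : Finset (Fin n)) := by
    simp only [Finset.mem_singleton]
    exact hab
  rw [hA]
  rw [Finset.sum_insert hnotin1, Finset.sum_insert hnotin2, Finset.sum_insert hnotin3,
      Finset.sum_singleton, Finset.sum_insert hnotin1, Finset.sum_insert hnotin2,
      Finset.sum_insert hnotin3, Finset.sum_singleton]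
  rw [hzz i, hzz j, Equiv.swap_apply_left, Equiv.swap_apply_right,
      Equiv.swap_apply_of_ne_of_ne (hz.2 i) h1, Equiv.swap_apply_of_ne_of_ne h2 (hz.2 j)]
  rw [Fin.lt_def] at ha
  rw [hij]
  nlinarith [ha]

lemma no_ascent_eq_rev {n : ℕ} (hpos : 0 < n) (z : Equiv.Perm (Fin n))
    (h : ∀ i j : Fin n, (j : ℕ) = (i : ℕ) + 1 → ¬ z i < z j) : z = revPerm n := by
  obtain ⟨m, rfl⟩ : ∃ m, n = m + 1 := ⟨n - 1, by omega⟩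
  have hdesc : StrictMono (fun x : Fin (m+1) => z (Fin.rev x)) := by
    rw [Fin.strictMono_iff_lt_succ]
    intro i
    have hlt := i.isLt
    have hij : ((Fin.rev (Fin.castSucc i) : Fin (m+1)) : ℕ) =
        ((Fin.rev (Fin.succ i) : Fin (m+1)) : ℕ) + 1 := by
      rw [Fin.val_rev, Fin.val_rev]
      simp only [Fin.coe_castSucc, Fin.val_succ]
      omega
    have hd := h (Fin.rev (Fin.succ i)) (Fin.rev (Fin.castSucc i)) hij
    have hne : z (Fin.rev (Fin.castSucc i)) ≠ z (Fin.rev (Fin.succ i)) := by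
      intro heq
      have := z.injective heq
      have hv := congrArg Fin.val this
      rw [Fin.val_rev, Fin.val_rev] at hv
      simp only [Fin.coe_castSucc, Fin.val_succ] at hv
      omega
    exact (not_lt.mp hd).lt_of_ne hne
  have hid : (fun x : Fin (m+1) => z (Fin.rev x)) = id := by
    haveI hw : WellFoundedLT (Fin (m+1)) := inferInstance
    have hri := @StrictMono.range_inj (Fin (m+1)) (Fin (m+1)) _ _ hw
      (fun x : Fin (m+1) => z (Fin.rev x)) id hdesc strictMono_id
    refine hri.mp ?_
    rw [Set.range_id]
    apply Set.range_eq_univ.mpr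
    exact z.surjective.comp Fin.rev_surjective
  apply Equiv.ext
  intro y
  have := congrFun hid (Fin.rev y)
  simp only [id_eq, Fin.rev_rev] at this
  exact this

end SPAux

theorem statement7 (n : ℕ) (hpos : 0 < n) (hev : n % 2 = 0)
    (G : Equiv.Perm (Fin n) → MvPolynomial (Fin n) Rb) (hG : IsSpFam n G)
    (G' : Equiv.Perm (Fin (n + 2)) → MvPolynomial (Fin (n + 2)) Rb)
    (hG' : IsSpFam (n + 2) G')
    (z : Equiv.Perm (Fin n)) (hz : IsFPF z) :
    G' (extPerm z (Equiv.swap (0 : Fin 2) 1)) =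
      rename (Fin.castLE (Nat.le_add_right n 2)) (G z) := by
  have key : ∀ (M : ℕ) (z : Equiv.Perm (Fin n)), IsFPF z → SPAux.msr z < M →
      G' (extPerm z (Equiv.swap (0 : Fin 2) 1)) =
        rename (Fin.castLE (Nat.le_add_right n 2)) (G z) := by
    intro M
    induction M with
    | zero => intro z _ h; omega
    | succ M ihM =>
      intro z hz hlt
      by_cases hasc : ∃ i j : Fin n, (j : ℕ) = (i : ℕ) + 1 ∧ z i < z j
      · obtain ⟨i, j, hij, ha⟩ := hasc
        obtain ⟨h1, h2, e1, e2, hzfpf'⟩ := SPAux.ascent_facts z hz i j hij ha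
        set z' := Equiv.swap i j * z * Equiv.swap i j with hz'def
        have hne0 : i ≠ j := by intro h; rw [h] at hij; omega
        have hzz : Equiv.swap i j * z' * Equiv.swap i j = z := by
          rw [hz'def]
          have hss := Equiv.swap_mul_self i j
          calc Equiv.swap i j * (Equiv.swap i j * z * Equiv.swap i j) * Equiv.swap i j
              = (Equiv.swap i j * Equiv.swap i j) * z *
                  (Equiv.swap i j * Equiv.swap i j) := by
                simp only [mul_assoc]
            _ = z := by rw [hss, one_mul, mul_one]
        have c1 : z' i ≠ j := by rw [e1]; exact hz.2 j
        have c2 : z' j ≠ i := by rw [e2]; exact hz.2 i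
        have c3 : z' j < z' i := by rw [e1, e2]; exact ha
        have d1 := hG.2 z' hzfpf' i j hij c1 c2 c3
        rw [hzz] at d1
        have d1' := SPAux.ddb_rename (SPAux.castLE_inj n) d1
        have hfpf2 := SPAux.fpf_ext n z' hzfpf'
        have hcj : ((Fin.castLE (Nat.le_add_right n 2) j : Fin (n+2)) : ℕ) =
            ((Fin.castLE (Nat.le_add_right n 2) i : Fin (n+2)) : ℕ) + 1 := by
          simpa using hij
        have c1' : (extPerm z' (Equiv.swap (0 : Fin 2) 1))
            (Fin.castLE (Nat.le_add_right n 2) i) ≠ Fin.castLE (Nat.le_add_right n 2) j := by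
          rw [SPAux.extPerm_castLE]
          exact fun hc => c1 (SPAux.castLE_inj n hc)
        have c2' : (extPerm z' (Equiv.swap (0 : Fin 2) 1))
            (Fin.castLE (Nat.le_add_right n 2) j) ≠ Fin.castLE (Nat.le_add_right n 2) i := by
          rw [SPAux.extPerm_castLE]
          exact fun hc => c2 (SPAux.castLE_inj n hc)
        have c3' : (extPerm z' (Equiv.swap (0 : Fin 2) 1))
            (Fin.castLE (Nat.le_add_right n 2) j) <
            (extPerm z' (Equiv.swap (0 : Fin 2) 1)) (Fin.castLE (Nat.le_add_right n 2) i) := by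
          rw [SPAux.extPerm_castLE, SPAux.extPerm_castLE, Fin.lt_def, Fin.coe_castLE,
            Fin.coe_castLE, ← Fin.lt_def]
          exact c3
        have d2 := hG'.2 (extPerm z' (Equiv.swap (0 : Fin 2) 1)) hfpf2
          (Fin.castLE (Nat.le_add_right n 2) i) (Fin.castLE (Nat.le_add_right n 2) j)
          hcj c1' c2' c3'
        rw [SPAux.extPerm_conj n z' i j, hzz] at d2
        have hlt' : SPAux.msr z' < M := by
          have := SPAux.msr_conj_lt z hz i j hij ha
          rw [← hz'def] at this
          omega
        rw [ihM z' hzfpf' hlt'] at d2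
        exact SPAux.ddb_unique (fun hc => hne0 (SPAux.castLE_inj n hc)) d2 d1'
      · push_neg at hasc
        have hrev : z = revPerm n :=
          SPAux.no_ascent_eq_rev hpos z (fun i j hij => not_lt.mpr (hasc i j hij))
        rw [hrev, hG.1]
        have hch := SPAux.chain n hev G' hG' n le_rfl
        rw [SPAux.w_last n hev] at hch
        rw [hch, SPAux.Pp_last n]
  exact key (SPAux.msr z + 1) z hz (by omega)

end
end

section
/- Let K ∈ {O, Sp} and z ∈ I_n. Then MX^K_z = {A ∈ Mat^K_n : rank(A_{[i][j]}) ≤ rank(z_{[i][j]}) for all (i,j) ∈ Ess(D^O(z))}; that is, a matrix A ∈ Mat^K_n satisfies rank(A_{[i][j]}) ≤ rank(z_{[i][j]}) for all i,j ∈ [n] if and only if it satisfies these inequalities for all (i,j) in the essential set Ess(D^O(z)). -/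
open MvPolynomial

noncomputable section

/-! ### Auxiliary lemmas for `statement10` -/

section Statement10Aux

open Module

theorem myrank_reindex {k m l n : Type*} [Fintype l] [Fintype n] (e₁ : m ≃ k) (e₂ : n ≃ l)
    (M : Matrix k l ℂ) : (M.submatrix e₁ e₂).rank = M.rank := by
  rw [Matrix.rank, Matrix.rank, Matrix.mulVecLin_submatrix, LinearMap.range_comp,
    LinearMap.range_comp,
    show LinearMap.funLeft ℂ ℂ ⇑e₂.symm = (LinearEquiv.funCongrLeft ℂ ℂ e₂.symm : _) from rfl,
    LinearEquiv.range, Submodule.map_top,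
    show LinearMap.funLeft ℂ ℂ ⇑e₁ = (LinearEquiv.funCongrLeft ℂ ℂ e₁ : _) from rfl]
  exact LinearEquiv.finrank_map_eq _ _

def corner {n : ℕ} (A : Matrix (Fin n) (Fin n) ℂ) (i j : ℕ) (hi : i ≤ n) (hj : j ≤ n) :
    Matrix (Fin i) (Fin j) ℂ :=
  Matrix.of fun a b => A ⟨(a : ℕ), lt_of_lt_of_le a.isLt hi⟩ ⟨(b : ℕ), lt_of_lt_of_le b.isLt hj⟩

theorem cornerRank_eq {n : ℕ} (A : Matrix (Fin n) (Fin n) ℂ) {i j : ℕ} (hi : i ≤ n)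
    (hj : j ≤ n) : cornerRank A i j = (corner A i j hi hj).rank := by
  have h : (Matrix.of fun (a : Fin (min i n)) (b : Fin (min j n)) =>
      A ⟨(a : ℕ), lt_of_lt_of_le a.isLt (min_le_right i n)⟩
        ⟨(b : ℕ), lt_of_lt_of_le b.isLt (min_le_right j n)⟩) =
      (corner A i j hi hj).submatrix (finCongr (min_eq_left hi)) (finCongr (min_eq_left hj)) :=
    rfl
  rw [cornerRank, h, myrank_reindex]

theorem myrank_neg {m l : Type*} [Fintype l] (M : Matrix m l ℂ) : (-M).rank = M.rank := by
  rw [Matrix.rank, Matrix.rank]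
  have h : (-M).mulVecLin = -M.mulVecLin := by
    ext v i
    simp [Matrix.mulVecLin, Matrix.mulVec, dotProduct, Finset.sum_neg_distrib]
  rw [h, LinearMap.range_neg]

theorem cornerRank_symm {n : ℕ} (A : Matrix (Fin n) (Fin n) ℂ)
    (hA : A.transpose = A ∨ A.transpose = -A) {i j : ℕ} (hi : i ≤ n) (hj : j ≤ n) :
    cornerRank A i j = cornerRank A j i := by
  rw [cornerRank_eq A hi hj, cornerRank_eq A hj hi]
  have h1 : corner A j i hj hi = (corner A.transpose i j hi hj).transpose := rfl
  rw [h1, Matrix.rank_transpose]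
  rcases hA with h | h
  · rw [h]
  · rw [h]
    have h2 : corner (-A) i j hi hj = -(corner A i j hi hj) := rfl
    rw [h2, myrank_neg]

theorem cornerRank_zero_right {n : ℕ} (A : Matrix (Fin n) (Fin n) ℂ) (i : ℕ) :
    cornerRank A i 0 = 0 := by
  have h := Matrix.rank_le_card_width (Matrix.of fun (a : Fin (min i n)) (b : Fin (min 0 n)) =>
    A ⟨(a : ℕ), lt_of_lt_of_le a.isLt (min_le_right i n)⟩
      ⟨(b : ℕ), lt_of_lt_of_le b.isLt (min_le_right 0 n)⟩)
  simpa [cornerRank] using h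

theorem myrank_castSucc_le {p q : ℕ} (M : Matrix (Fin p) (Fin (q+1)) ℂ) :
    (M.submatrix id Fin.castSucc).rank ≤ M.rank := by
  rw [Matrix.rank_eq_finrank_span_cols, Matrix.rank_eq_finrank_span_cols]
  have h : Module.Finite ℂ (Submodule.span ℂ (Set.range M.transpose)) :=
    FiniteDimensional.finiteDimensional_submodule _
  apply Submodule.finrank_mono
  apply Submodule.span_mono
  rintro v ⟨b, rfl⟩
  exact ⟨Fin.castSucc b, rfl⟩

theorem myrank_le_castSucc_add_one {p q : ℕ} (M : Matrix (Fin p) (Fin (q+1)) ℂ) :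
    M.rank ≤ (M.submatrix id Fin.castSucc).rank + 1 := by
  rw [Matrix.rank_eq_finrank_span_cols, Matrix.rank_eq_finrank_span_cols]
  have hle : Submodule.span ℂ (Set.range M.transpose) ≤
      Submodule.span ℂ (Set.range (M.submatrix id Fin.castSucc).transpose) ⊔
        Submodule.span ℂ {M.transpose (Fin.last q)} := by
    rw [← Submodule.span_union]
    apply Submodule.span_mono
    rintro v ⟨b, rfl⟩
    rcases Fin.eq_castSucc_or_eq_last b with ⟨c, rfl⟩ | rfl
    · exact Or.inl ⟨c, rfl⟩
    · exact Or.inr rfl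
  calc finrank ℂ (Submodule.span ℂ (Set.range M.transpose)) ≤
      finrank ℂ ((Submodule.span ℂ (Set.range (M.submatrix id Fin.castSucc).transpose)) ⊔
        (Submodule.span ℂ {M.transpose (Fin.last q)}) : Submodule ℂ (Fin p → ℂ)) :=
        Submodule.finrank_mono hle
    _ ≤ _ + finrank ℂ (Submodule.span ℂ {M.transpose (Fin.last q)}) :=
        Submodule.finrank_add_le_finrank_add_finrank _ _
    _ ≤ _ + 1 := by
        gcongr
        case h₁ => exact le_of_eq rfl
        exact (finrank_span_le_card ({M.transpose (Fin.last q)} : Set (Fin p → ℂ))).trans (by simp)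

theorem corner_castSucc {n : ℕ} (A : Matrix (Fin n) (Fin n) ℂ) {i j : ℕ} (hi : i ≤ n)
    (hj : j + 1 ≤ n) :
    corner A i j hi (Nat.le_of_succ_le hj) = (corner A i (j+1) hi hj).submatrix id Fin.castSucc :=
  rfl

theorem cornerRank_right_mono {n : ℕ} (A : Matrix (Fin n) (Fin n) ℂ) {i j : ℕ} (hi : i ≤ n)
    (hj : j + 1 ≤ n) : cornerRank A i j ≤ cornerRank A i (j + 1) := by
  rw [cornerRank_eq A hi (Nat.le_of_succ_le hj), cornerRank_eq A hi hj, corner_castSucc A hi hj]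
  exact myrank_castSucc_le _

theorem cornerRank_right_step {n : ℕ} (A : Matrix (Fin n) (Fin n) ℂ) {i j : ℕ} (hi : i ≤ n)
    (hj : j + 1 ≤ n) : cornerRank A i (j + 1) ≤ cornerRank A i j + 1 := by
  rw [cornerRank_eq A hi (Nat.le_of_succ_le hj), cornerRank_eq A hi hj, corner_castSucc A hi hj]
  exact myrank_le_castSucc_add_one _

theorem cornerRank_left_mono {n : ℕ} (A : Matrix (Fin n) (Fin n) ℂ)
    (hA : A.transpose = A ∨ A.transpose = -A) {i j : ℕ} (hi : i + 1 ≤ n) (hj : j ≤ n) :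
    cornerRank A i j ≤ cornerRank A (i + 1) j := by
  rw [cornerRank_symm A hA (Nat.le_of_succ_le hi) hj, cornerRank_symm A hA hi hj]
  exact cornerRank_right_mono A hj hi

theorem cornerRank_left_step {n : ℕ} (A : Matrix (Fin n) (Fin n) ℂ)
    (hA : A.transpose = A ∨ A.transpose = -A) {i j : ℕ} (hi : i + 1 ≤ n) (hj : j ≤ n) :
    cornerRank A (i + 1) j ≤ cornerRank A i j + 1 := by
  rw [cornerRank_symm A hA (Nat.le_of_succ_le hi) hj, cornerRank_symm A hA hi hj]
  exact cornerRank_right_step A hj hi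

theorem permRank_zero_right {n : ℕ} (z : Equiv.Perm (Fin n)) (i : ℕ) : permRank z i 0 = 0 := by
  simp [permRank]

theorem zz_apply {n : ℕ} {z : Equiv.Perm (Fin n)} (hz : z * z = 1) (x : Fin n) : z (z x) = x := by
  have h := congrArg (fun w : Equiv.Perm (Fin n) => w x) hz
  simpa using h

theorem permRank_symm {n : ℕ} {z : Equiv.Perm (Fin n)} (hz : z * z = 1) (i j : ℕ) :
    permRank z i j = permRank z j i := by
  unfold permRank
  apply Finset.card_bij' (fun k _ => z k) (fun k _ => z k)
  · intro a ha
    simp only [Finset.mem_filter, Finset.mem_univ, true_and] at ha ⊢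
    rw [zz_apply hz]
    exact ⟨ha.2, ha.1⟩
  · intro a ha
    simp only [Finset.mem_filter, Finset.mem_univ, true_and] at ha ⊢
    rw [zz_apply hz]
    exact ⟨ha.2, ha.1⟩
  · intro a _; exact zz_apply hz a
  · intro a _; exact zz_apply hz a

theorem permRank_succ_right {n : ℕ} (z : Equiv.Perm (Fin n)) (i j : ℕ) (hb : j < n) :
    permRank z i (j+1) =
      permRank z i j + (if ((z ⟨j, hb⟩ : Fin n) : ℕ) < i then 1 else 0) := by
  unfold permRank
  have hset : (Finset.univ.filter (fun k : Fin n => (k:ℕ) < j+1 ∧ ((z k : Fin n):ℕ) < i)) =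
      (Finset.univ.filter (fun k : Fin n => (k:ℕ) < j ∧ ((z k : Fin n):ℕ) < i)) ∪
      (Finset.univ.filter (fun k : Fin n => k = ⟨j, hb⟩ ∧ ((z k : Fin n):ℕ) < i)) := by
    ext k
    simp only [Finset.mem_filter, Finset.mem_union, Finset.mem_univ, true_and]
    constructor
    · rintro ⟨hk, hzk⟩
      rcases Nat.lt_succ_iff_lt_or_eq.mp hk with h | h
      · exact Or.inl ⟨h, hzk⟩
      · exact Or.inr ⟨Fin.ext h, hzk⟩
    · rintro (⟨hk, hzk⟩ | ⟨hk, hzk⟩)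
      · exact ⟨Nat.lt_succ_of_lt hk, hzk⟩
      · refine ⟨?_, hzk⟩
        rw [hk]
        exact Nat.lt_succ_self j
  rw [hset, Finset.card_union_of_disjoint]
  · congr 1
    by_cases hzi : ((z ⟨j, hb⟩ : Fin n) : ℕ) < i
    · rw [if_pos hzi,
        show (Finset.univ.filter (fun k : Fin n => k = ⟨j,hb⟩ ∧ ((z k : Fin n):ℕ) < i)) =
          {(⟨j,hb⟩ : Fin n)} from ?_]
      · simp
      · ext k
        simp only [Finset.mem_filter, Finset.mem_univ, true_and, Finset.mem_singleton]
        constructor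
        · rintro ⟨h, _⟩; exact h
        · rintro rfl; exact ⟨rfl, hzi⟩
    · rw [if_neg hzi]
      have hemp : (Finset.univ.filter
          (fun k : Fin n => k = ⟨j,hb⟩ ∧ ((z k : Fin n):ℕ) < i)) = ∅ := by
        ext k
        simp only [Finset.mem_filter, Finset.mem_univ, true_and, Finset.notMem_empty,
          iff_false, not_and]
        rintro rfl
        exact hzi
      rw [hemp, Finset.card_empty]
  · rw [Finset.disjoint_left]
    rintro k hk hk'
    simp only [Finset.mem_filter, Finset.mem_univ, true_and] at hk hk'
    rw [hk'.1] at hk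
    exact absurd hk.1 (lt_irrefl j)

theorem permRank_succ_left {n : ℕ} {z : Equiv.Perm (Fin n)} (hz : z * z = 1) (i j : ℕ)
    (ha : i < n) :
    permRank z (i+1) j =
      permRank z i j + (if ((z ⟨i, ha⟩ : Fin n) : ℕ) < j then 1 else 0) := by
  rw [permRank_symm hz (i+1) j, permRank_succ_right z j i ha, permRank_symm hz j i]

theorem mem_DO {n : ℕ} {z : Equiv.Perm (Fin n)} (hz : z * z = 1) (a c : Fin n) :
    (a, c) ∈ DO n z ↔ c ≤ a ∧ c < z a ∧ a < z c := by
  unfold DO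
  rw [Finset.mem_image]
  constructor
  · rintro ⟨⟨a', b⟩, hmem, heq⟩
    simp only [Finset.mem_filter, Finset.mem_univ, true_and] at hmem
    obtain ⟨h1, h2, h3⟩ := hmem
    have h4 : a' = a := congrArg Prod.fst heq
    have h5 : z b = c := congrArg Prod.snd heq
    subst h4; subst h5
    exact ⟨h2, h1, by rwa [zz_apply hz]⟩
  · rintro ⟨h1, h2, h3⟩
    refine ⟨(a, z c), ?_, ?_⟩
    · simp only [Finset.mem_filter, Finset.mem_univ, true_and]
      rw [zz_apply hz]
      exact ⟨h2, h1, h3⟩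
    · rw [zz_apply hz]

theorem not_ess {n : ℕ} {z : Equiv.Perm (Fin n)} {a c : Fin n} (hD : (a, c) ∈ DO n z)
    (hE : (a, c) ∉ Ess (DO n z)) :
    (∃ q ∈ DO n z, q.1 = a ∧ (q.2 : ℕ) = (c : ℕ) + 1) ∨
    (∃ q ∈ DO n z, (q.1 : ℕ) = (a : ℕ) + 1 ∧ q.2 = c) := by
  unfold Ess at hE
  rw [Finset.mem_filter, not_and] at hE
  have h := hE hD
  rw [not_and_or] at h
  rcases h with h | h
  · push_neg at h
    obtain ⟨q, hq, h1, h2⟩ := h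
    exact Or.inl ⟨q, hq, h1, h2⟩
  · push_neg at h
    obtain ⟨q, hq, h1, h2⟩ := h
    exact Or.inr ⟨q, hq, h1, h2⟩

theorem claimB {n : ℕ} {z : Equiv.Perm (Fin n)} (hz : z * z = 1)
    {A : Matrix (Fin n) (Fin n) ℂ} (hA : A.transpose = A ∨ A.transpose = -A)
    (hEss : ∀ p ∈ Ess (DO n z),
      cornerRank A ((p.1 : ℕ) + 1) ((p.2 : ℕ) + 1) ≤
        permRank z ((p.1 : ℕ) + 1) ((p.2 : ℕ) + 1)) :
    ∀ (m : ℕ) (a c : Fin n), (n - 1 - (a : ℕ)) + (n - 1 - (c : ℕ)) ≤ m → (a, c) ∈ DO n z →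
      cornerRank A ((a : ℕ) + 1) ((c : ℕ) + 1) ≤ permRank z ((a : ℕ) + 1) ((c : ℕ) + 1) := by
  intro m
  induction m with
  | zero =>
    intro a c hm hD
    by_cases hE : (a, c) ∈ Ess (DO n z)
    · exact hEss (a, c) hE
    · exfalso
      have ha := a.isLt
      have hc := c.isLt
      rcases not_ess hD hE with ⟨q, _, _, h2⟩ | ⟨q, _, h1, _⟩
      · have := q.2.isLt
        omega
      · have := q.1.isLt
        omega
  | succ m ih =>
    intro a c hm hD
    by_cases hE : (a, c) ∈ Ess (DO n z)
    · exact hEss (a, c) hE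
    · rcases not_ess hD hE with ⟨q, hq, hq1, hq2⟩ | ⟨q, hq, hq1, hq2⟩
      · -- neighbor to the right: q = (a, c+1)
        have hq'mem : (a, q.2) ∈ DO n z := by
          rw [← hq1]
          simpa using hq
        have hq' := (mem_DO hz a q.2).mp hq'mem
        have hq2lt := q.2.isLt
        have hcn : (c : ℕ) + 1 < n := by omega
        have hmeas : (n - 1 - (a : ℕ)) + (n - 1 - ((q.2 : Fin n) : ℕ)) ≤ m := by omega
        have hih := ih a q.2 hmeas hq'mem
        rw [hq2] at hih
        have h1 : cornerRank A ((a : ℕ) + 1) ((c : ℕ) + 1) ≤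
            cornerRank A ((a : ℕ) + 1) ((c : ℕ) + 1 + 1) :=
          cornerRank_right_mono A a.isLt hcn
        have h2 : permRank z ((a : ℕ) + 1) ((c : ℕ) + 1 + 1) =
            permRank z ((a : ℕ) + 1) ((c : ℕ) + 1) := by
          rw [permRank_succ_right z _ _ hcn]
          have hq2' : q.2 = (⟨(c : ℕ) + 1, hcn⟩ : Fin n) := Fin.ext hq2
          have hnlt : ¬ ((z ⟨(c : ℕ) + 1, hcn⟩ : Fin n) : ℕ) < (a : ℕ) + 1 := by
            rw [← hq2']
            have := hq'.2.2
            rw [Fin.lt_def] at this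
            omega
          rw [if_neg hnlt, add_zero]
        exact h1.trans (hih.trans (le_of_eq h2))
      · -- neighbor below: q = (a+1, c)
        have hq'mem : (q.1, c) ∈ DO n z := by
          rw [← hq2]
          simpa using hq
        have hq' := (mem_DO hz q.1 c).mp hq'mem
        have hq1lt := q.1.isLt
        have han : (a : ℕ) + 1 < n := by omega
        have hmeas : (n - 1 - ((q.1 : Fin n) : ℕ)) + (n - 1 - (c : ℕ)) ≤ m := by omega
        have hih := ih q.1 c hmeas hq'mem
        rw [hq1] at hih
        have h1 : cornerRank A ((a : ℕ) + 1) ((c : ℕ) + 1) ≤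
            cornerRank A ((a : ℕ) + 1 + 1) ((c : ℕ) + 1) :=
          cornerRank_left_mono A hA han c.isLt
        have h2 : permRank z ((a : ℕ) + 1 + 1) ((c : ℕ) + 1) =
            permRank z ((a : ℕ) + 1) ((c : ℕ) + 1) := by
          rw [permRank_succ_left hz _ _ han]
          have hq1' : q.1 = (⟨(a : ℕ) + 1, han⟩ : Fin n) := Fin.ext hq1
          have hnlt : ¬ ((z ⟨(a : ℕ) + 1, han⟩ : Fin n) : ℕ) < (c : ℕ) + 1 := by
            rw [← hq1']
            have := hq'.2.1
            rw [Fin.lt_def] at this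
            omega
          rw [if_neg hnlt, add_zero]
        exact h1.trans (hih.trans (le_of_eq h2))

theorem claimC {n : ℕ} {z : Equiv.Perm (Fin n)} (hz : z * z = 1)
    {A : Matrix (Fin n) (Fin n) ℂ} (hA : A.transpose = A ∨ A.transpose = -A)
    (hEss : ∀ p ∈ Ess (DO n z),
      cornerRank A ((p.1 : ℕ) + 1) ((p.2 : ℕ) + 1) ≤
        permRank z ((p.1 : ℕ) + 1) ((p.2 : ℕ) + 1)) :
    ∀ (s i j : ℕ), i + j ≤ s → j ≤ i → i ≤ n → cornerRank A i j ≤ permRank z i j := by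
  intro s
  induction s with
  | zero =>
    intro i j hs hji hin
    have hj0 : j = 0 := by omega
    subst hj0
    rw [permRank_zero_right, cornerRank_zero_right]
  | succ s ih =>
    intro i j hs hji hin
    rcases j with _ | c
    · rw [permRank_zero_right, cornerRank_zero_right]
    · obtain ⟨a, rfl⟩ : ∃ a, i = a + 1 := ⟨i - 1, by omega⟩
      have han : a < n := by omega
      have hcn : c < n := by omega
      by_cases hD : ((⟨a, han⟩ : Fin n), (⟨c, hcn⟩ : Fin n)) ∈ DO n z
      · exact claimB hz hA hEss ((n - 1 - a) + (n - 1 - c)) ⟨a, han⟩ ⟨c, hcn⟩ le_rfl hD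
      · rw [mem_DO hz] at hD
        push_neg at hD
        have hca : (⟨c, hcn⟩ : Fin n) ≤ (⟨a, han⟩ : Fin n) := by
          rw [Fin.le_def]
          show c ≤ a
          omega
        by_cases hzc : ((z ⟨c, hcn⟩ : Fin n) : ℕ) ≤ a
        · -- column reduction
          have hstep := permRank_succ_right z (a + 1) c hcn
          rw [if_pos (by omega : ((z ⟨c, hcn⟩ : Fin n) : ℕ) < a + 1)] at hstep
          have hcr := cornerRank_right_step A (by omega : a + 1 ≤ n) (by omega : c + 1 ≤ n)
          have hprev := ih (a + 1) c (by omega) (by omega) (by omega)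
          linarith
        · -- row reduction
          have hza : ((z ⟨a, han⟩ : Fin n) : ℕ) ≤ c := by
            by_contra hcon
            push_neg at hcon
            have h3 := hD hca (by rw [Fin.lt_def]; exact hcon)
            rw [Fin.le_def] at h3
            exact hzc h3
          have hstep := permRank_succ_left hz a (c + 1) han
          rw [if_pos (by omega : ((z ⟨a, han⟩ : Fin n) : ℕ) < c + 1)] at hstep
          have hcr := cornerRank_left_step A hA (by omega : a + 1 ≤ n) (by omega : c + 1 ≤ n)
          have hprev : cornerRank A a (c + 1) ≤ permRank z a (c + 1) := by
            by_cases hj2 : c + 1 ≤ a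
            · exact ih a (c + 1) (by omega) hj2 (by omega)
            · have hac : a = c := by omega
              subst hac
              rw [cornerRank_symm A hA (by omega : a ≤ n) (by omega : a + 1 ≤ n),
                permRank_symm hz]
              exact ih (a + 1) a (by omega) (by omega) (by omega)
          linarith

end Statement10Aux

theorem statement10 (n : ℕ) (z : Equiv.Perm (Fin n)) (hz : z * z = 1)
    (A : Matrix (Fin n) (Fin n) ℂ) (hA : A.transpose = A ∨ A.transpose = -A) :
    (∀ i j : ℕ, i ≤ n → j ≤ n → cornerRank A i j ≤ permRank z i j) ↔
      ∀ p ∈ Ess (DO n z),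
        cornerRank A ((p.1 : ℕ) + 1) ((p.2 : ℕ) + 1) ≤
          permRank z ((p.1 : ℕ) + 1) ((p.2 : ℕ) + 1) := by
  constructor
  · intro h p _
    exact h _ _ (Nat.succ_le_of_lt p.1.isLt) (Nat.succ_le_of_lt p.2.isLt)
  · intro hEss i j hi hj
    by_cases hji : j ≤ i
    · exact claimC hz hA hEss (i + j) i j le_rfl hji hi
    · rw [cornerRank_symm A hA hi hj, permRank_symm hz]
      exact claimC hz hA hEss (j + i) j i le_rfl (by omega) hj


end
end
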